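/- arXiv:math/0410171 — 4 statements merged into one kernel-verified Lean document; each statement's English description precedes it below -/
import Mathlib

section
/- For the VRRW on ℤ and any x ∈ ℤ, almost surely on the event Υ(x), the limit α⁻_∞(x+2) := lim_n Z_n(x+1)/(Z_n(x+1)+Z_n(x+3)) exists and lies in [0,1); moreover on Υ(x) ∩ {α⁻_∞(x+2) > 0}, the event Υ(x+4) holds. -/
open MeasureTheory Filter

/-- `Znum X n v ω` is `1` plus the number of visits of the walk `X` to the site
`v` up through time `n` (the quantity `Z_n(v)` of the paper), as a real number. -/
noncomputable def Znum {Ω : Type*} (X : ℕ → Ω → ℤ) (n : ℕ) (v : ℤ) (ω : Ω) : ℝ :=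
  1 + ∑ i ∈ Finset.range (n + 1), if X i ω = v then (1 : ℝ) else 0

/-- `Y_n(x)`: weighted number of visits to `x` up to time `n`. -/
noncomputable def Ynum {Ω : Type*} (X : ℕ → Ω → ℤ) (n : ℕ) (x : ℤ) (ω : Ω) : ℝ :=
  ∑ k ∈ Finset.Icc 1 n,
    (if X (k - 1) ω = x then (1 : ℝ) else 0) /
      (Znum X (k - 1) (x - 1) ω + Znum X (k - 1) (x + 1) ω)

/-- `Y⁺_n(x)`: weighted number of crossings from `x` to `x+1` up to time `n`. -/
noncomputable def Yplus {Ω : Type*} (X : ℕ → Ω → ℤ) (n : ℕ) (x : ℤ) (ω : Ω) : ℝ :=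
  ∑ k ∈ Finset.Icc 1 n,
    (if X (k - 1) ω = x ∧ X k ω = x + 1 then (1 : ℝ) else 0) / Znum X (k - 1) (x + 1) ω

/-- `Y⁻_n(x)`: weighted number of crossings from `x` to `x-1` up to time `n`. -/
noncomputable def Yminus {Ω : Type*} (X : ℕ → Ω → ℤ) (n : ℕ) (x : ℤ) (ω : Ω) : ℝ :=
  ∑ k ∈ Finset.Icc 1 n,
    (if X (k - 1) ω = x ∧ X k ω = x - 1 then (1 : ℝ) else 0) / Znum X (k - 1) (x - 1) ω

/-- The event `Υ(x) = {Y_∞(x) < ∞}` (the sums `Y_n(x)` are nondecreasing in `n`,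
so finiteness of the limit is boundedness). -/
def Upsilon {Ω : Type*} (X : ℕ → Ω → ℤ) (x : ℤ) : Set Ω :=
  {ω | BddAbove (Set.range fun n => Ynum X n x ω)}

/-- The event `Υ⁺(x) = {Y⁺_∞(x) < ∞}`. -/
def UpsilonPlus {Ω : Type*} (X : ℕ → Ω → ℤ) (x : ℤ) : Set Ω :=
  {ω | BddAbove (Set.range fun n => Yplus X n x ω)}

/-- The event `Υ⁻(x) = {Y⁻_∞(x) < ∞}`. -/
def UpsilonMinus {Ω : Type*} (X : ℕ → Ω → ℤ) (x : ℤ) : Set Ω :=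
  {ω | BddAbove (Set.range fun n => Yminus X n x ω)}

/-- `α⁻_n(y) = Z_n(y-1)/(Z_n(y-1) + Z_n(y+1))`. -/
noncomputable def alphaMinus {Ω : Type*} (X : ℕ → Ω → ℤ) (n : ℕ) (y : ℤ) (ω : Ω) : ℝ :=
  Znum X n (y - 1) ω / (Znum X n (y - 1) ω + Znum X n (y + 1) ω)

/-- `(X_n)` is a vertex-reinforced random walk on `ℤ` started at `v0`:
it is adapted, starts at `v0`, a.s. makes nearest-neighbor steps, and the
conditional law of each step is proportional to the augmented occupations of
the two neighbors. -/
structure IsVRRW {Ω : Type*} {m0 : MeasurableSpace Ω} (μ : Measure Ω)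
    (ℱ : Filtration ℕ m0) (X : ℕ → Ω → ℤ) (v0 : ℤ) : Prop where
  adapted : Adapted ℱ X
  init : ∀ ω, X 0 ω = v0
  nearest : ∀ n, ∀ᵐ ω ∂μ, X (n + 1) ω = X n ω + 1 ∨ X (n + 1) ω = X n ω - 1
  step : ∀ n, ∀ᵐ ω ∂μ, ∀ x : ℤ,
    (μ[Set.indicator {ω' | X (n + 1) ω' = x} (fun _ => (1 : ℝ)) | ℱ n]) ω =
      if x = X n ω + 1 ∨ x = X n ω - 1 then
        Znum X n x ω / (Znum X n (X n ω - 1) ω + Znum X n (X n ω + 1) ω)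
      else 0



section basics
variable {Ω : Type*} {X : ℕ → Ω → ℤ}

lemma Znum_ge_one (n : ℕ) (v : ℤ) (ω : Ω) : 1 ≤ Znum X n v ω := by
  have : 0 ≤ ∑ i ∈ Finset.range (n + 1), if X i ω = v then (1 : ℝ) else 0 :=
    Finset.sum_nonneg fun i _ => by positivity
  unfold Znum; linarith

lemma Znum_pos (n : ℕ) (v : ℤ) (ω : Ω) : 0 < Znum X n v ω :=
  lt_of_lt_of_le one_pos (Znum_ge_one n v ω)

lemma Znum_succ (n : ℕ) (v : ℤ) (ω : Ω) :
    Znum X (n + 1) v ω = Znum X n v ω + if X (n + 1) ω = v then 1 else 0 := by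
  unfold Znum; rw [Finset.sum_range_succ]; ring

variable {m0 : MeasurableSpace Ω} {ℱ : Filtration ℕ m0}

lemma measurable_ind (hX : Adapted ℱ X) {i n : ℕ} (hin : i ≤ n) (v : ℤ) :
    Measurable[ℱ n] (fun ω => if X i ω = v then (1 : ℝ) else 0) := by
  have hXi : Measurable[ℱ n] (X i) :=
    (hX i).mono (ℱ.mono hin) le_rfl
  exact Measurable.ite (hXi (measurableSet_singleton v)) measurable_const measurable_const

lemma measurable_Znum (hX : Adapted ℱ X) (n : ℕ) (v : ℤ) :
    Measurable[ℱ n] (fun ω => Znum X n v ω) := by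
  apply Measurable.const_add
  apply Finset.measurable_sum
  intro i hi
  exact measurable_ind hX (Nat.lt_succ_iff.mp (Finset.mem_range.mp hi)) v
end basics

section basics2
variable {Ω : Type*} {X : ℕ → Ω → ℤ}

lemma ind_and (p q : Prop) [Decidable p] [Decidable q] :
    (if p ∧ q then (1:ℝ) else 0) = (if p then (1:ℝ) else 0) * (if q then (1:ℝ) else 0) := by
  by_cases hp : p <;> by_cases hq : q <;> simp [hp, hq]

lemma Ynum_succ (n : ℕ) (x : ℤ) (ω : Ω) :
    Ynum X (n + 1) x ω = Ynum X n x ω +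
      (if X n ω = x then (1 : ℝ) else 0) /
        (Znum X n (x - 1) ω + Znum X n (x + 1) ω) := by
  unfold Ynum
  rw [Finset.sum_Icc_succ_top (Nat.le_add_left 1 n)]
  simp

lemma Yplus_succ (n : ℕ) (x : ℤ) (ω : Ω) :
    Yplus X (n + 1) x ω = Yplus X n x ω +
      (if X n ω = x ∧ X (n + 1) ω = x + 1 then (1 : ℝ) else 0) / Znum X n (x + 1) ω := by
  unfold Yplus
  rw [Finset.sum_Icc_succ_top (Nat.le_add_left 1 n)]
  simp

lemma Yminus_succ (n : ℕ) (x : ℤ) (ω : Ω) :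
    Yminus X (n + 1) x ω = Yminus X n x ω +
      (if X n ω = x ∧ X (n + 1) ω = x - 1 then (1 : ℝ) else 0) / Znum X n (x - 1) ω := by
  unfold Yminus
  rw [Finset.sum_Icc_succ_top (Nat.le_add_left 1 n)]
  simp

lemma term_nonneg_le_one {a d : ℝ} (ha : a = 0 ∨ a = 1) (hd : 1 ≤ d) :
    a / d ∈ Set.Icc (0:ℝ) 1 := by
  rcases ha with h | h <;> subst h <;>
    constructor
  · simp
  · simp
  · positivity
  · rw [div_le_one (by linarith)]; linarith

lemma Ynum_nonneg (n : ℕ) (x : ℤ) (ω : Ω) : 0 ≤ Ynum X n x ω := by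
  apply Finset.sum_nonneg
  intro k _
  have := Znum_ge_one (X := X) (k-1) (x-1) ω
  have := Znum_ge_one (X := X) (k-1) (x+1) ω
  positivity

lemma Yplus_nonneg (n : ℕ) (x : ℤ) (ω : Ω) : 0 ≤ Yplus X n x ω := by
  apply Finset.sum_nonneg
  intro k _
  have := Znum_pos (X := X) (k-1) (x+1) ω
  positivity

lemma Yminus_nonneg (n : ℕ) (x : ℤ) (ω : Ω) : 0 ≤ Yminus X n x ω := by
  apply Finset.sum_nonneg
  intro k _
  have := Znum_pos (X := X) (k-1) (x-1) ω
  positivity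

lemma Ynum_mono (x : ℤ) (ω : Ω) : Monotone fun n => Ynum X n x ω := by
  apply monotone_nat_of_le_succ
  intro n
  rw [Ynum_succ]
  have h1 := Znum_ge_one (X := X) n (x-1) ω
  have h2 := Znum_ge_one (X := X) n (x+1) ω
  have : (0:ℝ) ≤ (if X n ω = x then (1 : ℝ) else 0) / (Znum X n (x - 1) ω + Znum X n (x + 1) ω) := by
    positivity
  linarith

lemma Yminus_mono (x : ℤ) (ω : Ω) : Monotone fun n => Yminus X n x ω := by
  apply monotone_nat_of_le_succ
  intro n
  rw [Yminus_succ]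
  have h1 := Znum_pos (X := X) n (x-1) ω
  have : (0:ℝ) ≤ (if X n ω = x ∧ X (n+1) ω = x - 1 then (1 : ℝ) else 0) / Znum X n (x - 1) ω := by
    positivity
  linarith

lemma Ynum_le (n : ℕ) (x : ℤ) (ω : Ω) : Ynum X n x ω ≤ n := by
  calc Ynum X n x ω ≤ ∑ _k ∈ Finset.Icc 1 n, (1:ℝ) := by
        apply Finset.sum_le_sum
        intro k _
        have h1 := Znum_ge_one (X := X) (k-1) (x-1) ω
        have h2 := Znum_ge_one (X := X) (k-1) (x+1) ω
        exact (term_nonneg_le_one (by split <;> simp) (by linarith)).2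
    _ ≤ n := by simp [Nat.card_Icc]

lemma Yplus_le (n : ℕ) (x : ℤ) (ω : Ω) : Yplus X n x ω ≤ n := by
  calc Yplus X n x ω ≤ ∑ _k ∈ Finset.Icc 1 n, (1:ℝ) := by
        apply Finset.sum_le_sum
        intro k _
        exact (term_nonneg_le_one (by split <;> simp) (Znum_ge_one _ _ _)).2
    _ ≤ n := by simp [Nat.card_Icc]

lemma Yminus_le (n : ℕ) (x : ℤ) (ω : Ω) : Yminus X n x ω ≤ n := by
  calc Yminus X n x ω ≤ ∑ _k ∈ Finset.Icc 1 n, (1:ℝ) := by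
        apply Finset.sum_le_sum
        intro k _
        exact (term_nonneg_le_one (by split <;> simp) (Znum_ge_one _ _ _)).2
    _ ≤ n := by simp [Nat.card_Icc]

variable {m0 : MeasurableSpace Ω} {ℱ : Filtration ℕ m0}

lemma measurable_Znum' (hX : Adapted ℱ X) {m n : ℕ} (hmn : m ≤ n) (v : ℤ) :
    Measurable[ℱ n] (fun ω => Znum X m v ω) :=
  (measurable_Znum hX m v).mono (ℱ.mono hmn) le_rfl

lemma measurable_Ynum (hX : Adapted ℱ X) (n : ℕ) (x : ℤ) :
    Measurable[ℱ n] (fun ω => Ynum X n x ω) := by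
  apply Finset.measurable_sum
  intro k hk
  have hk' : k - 1 ≤ n := le_trans (Nat.sub_le k 1) (Finset.mem_Icc.mp hk).2
  exact (measurable_ind hX hk' x).div
    ((measurable_Znum' hX hk' (x-1)).add (measurable_Znum' hX hk' (x+1)))

lemma measurable_ind_and (hX : Adapted ℱ X) {i j n : ℕ} (hin : i ≤ n) (hjn : j ≤ n)
    (u v : ℤ) : Measurable[ℱ n] (fun ω => if X i ω = u ∧ X j ω = v then (1:ℝ) else 0) := by
  have : (fun ω => if X i ω = u ∧ X j ω = v then (1:ℝ) else 0) =
      fun ω => (if X i ω = u then (1:ℝ) else 0) * (if X j ω = v then (1:ℝ) else 0) := by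
    funext ω; exact ind_and _ _
  rw [this]
  exact (measurable_ind hX hin u).mul (measurable_ind hX hjn v)

lemma measurable_Yplus (hX : Adapted ℱ X) (n : ℕ) (x : ℤ) :
    Measurable[ℱ n] (fun ω => Yplus X n x ω) := by
  apply Finset.measurable_sum
  intro k hk
  have hk2 : k ≤ n := (Finset.mem_Icc.mp hk).2
  have hk' : k - 1 ≤ n := le_trans (Nat.sub_le k 1) hk2
  exact (measurable_ind_and hX hk' hk2 x (x+1)).div (measurable_Znum' hX hk' (x+1))

lemma measurable_Yminus (hX : Adapted ℱ X) (n : ℕ) (x : ℤ) :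
    Measurable[ℱ n] (fun ω => Yminus X n x ω) := by
  apply Finset.measurable_sum
  intro k hk
  have hk2 : k ≤ n := (Finset.mem_Icc.mp hk).2
  have hk' : k - 1 ≤ n := le_trans (Nat.sub_le k 1) hk2
  exact (measurable_ind_and hX hk' hk2 x (x-1)).div (measurable_Znum' hX hk' (x-1))

lemma integrable_of_bdd {μ : Measure Ω} [IsFiniteMeasure μ] {f : Ω → ℝ} {C : ℝ}
    (hf : AEStronglyMeasurable f μ) (h : ∀ ω, |f ω| ≤ C) : Integrable f μ :=
  (integrable_const C).mono' hf (ae_of_all _ (by simpa [Real.norm_eq_abs] using h))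

end basics2

section condexp
variable {Ω : Type*} {m0 : MeasurableSpace Ω} {μ : Measure Ω} [IsProbabilityMeasure μ]
  {ℱ : Filtration ℕ m0} {X : ℕ → Ω → ℤ} {v0 : ℤ}

lemma condexp_cross (h : IsVRRW μ ℱ X v0) (n : ℕ) (y s : ℤ) (hs : s = 1 ∨ s = -1) :
    μ[(fun ω => (if X n ω = y ∧ X (n + 1) ω = y + s then (1:ℝ) else 0) / Znum X n (y + s) ω) | ℱ n]
      =ᵐ[μ] fun ω => (if X n ω = y then (1:ℝ) else 0) /
        (Znum X n (y - 1) ω + Znum X n (y + 1) ω) := by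
  set F : Ω → ℝ := fun ω => (if X n ω = y then (1:ℝ) else 0) / Znum X n (y + s) ω with hF
  set G : Ω → ℝ := Set.indicator {ω' | X (n + 1) ω' = y + s} (fun _ => (1 : ℝ)) with hG
  have hGval : ∀ ω, G ω = if X (n + 1) ω = y + s then (1:ℝ) else 0 := by
    intro ω
    simp [hG, Set.indicator_apply, Set.mem_setOf_eq]
  have hfg : (fun ω => (if X n ω = y ∧ X (n + 1) ω = y + s then (1:ℝ) else 0) /
      Znum X n (y + s) ω) = F * G := by
    funext ω
    simp only [Pi.mul_apply, hGval, hF, ind_and]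
    ring
  have hFmeas : StronglyMeasurable[ℱ n] F :=
    ((measurable_ind h.adapted le_rfl y).div (measurable_Znum h.adapted n (y + s))).stronglyMeasurable
  have hFbdd : ∀ ω, |F ω| ≤ 1 := by
    intro ω
    have := term_nonneg_le_one (a := if X n ω = y then (1:ℝ) else 0)
      (by split <;> simp) (Znum_ge_one (X := X) n (y + s) ω)
    rw [hF, abs_of_nonneg this.1]
    exact this.2
  have hGmeas : Measurable G := by
    have : Measurable (X (n+1)) := (h.adapted (n+1)).mono (ℱ.le (n+1)) le_rfl
    have hset : MeasurableSet {ω' | X (n + 1) ω' = y + s} := this (measurableSet_singleton _)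
    exact (measurable_const.indicator hset)
  have hGbdd : ∀ ω, |G ω| ≤ 1 := by
    intro ω; rw [hGval]; split <;> simp
  have hGint : Integrable G μ := integrable_of_bdd hGmeas.aestronglyMeasurable hGbdd
  have hFGint : Integrable (F * G) μ := by
    apply integrable_of_bdd
    · exact (((hFmeas.mono (ℱ.le n)).measurable.mul hGmeas).aestronglyMeasurable)
    · intro ω
      calc |(F * G) ω| = |F ω| * |G ω| := abs_mul _ _
        _ ≤ 1 * 1 := mul_le_mul (hFbdd ω) (hGbdd ω) (abs_nonneg _) zero_le_one
        _ = 1 := mul_one 1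
  have hpull := condExp_mul_of_stronglyMeasurable_left hFmeas hFGint hGint
  rw [hfg]
  refine hpull.trans ?_
  filter_upwards [h.step n] with ω hstep
  have hstepval := hstep (y + s)
  simp only [Pi.mul_apply]
  rw [← hG] at hstepval
  rw [hstepval]
  by_cases hxy : X n ω = y
  · have hcond : y + s = X n ω + 1 ∨ y + s = X n ω - 1 := by
      rcases hs with rfl | rfl
      · left; rw [hxy]
      · right; rw [hxy]; ring
    rw [if_pos hcond, hF, hxy]
    simp only [if_pos rfl]
    have h1 : Znum X n (y + s) ω ≠ 0 := ne_of_gt (Znum_pos _ _ _)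
    have h2 : Znum X n (y - 1) ω + Znum X n (y + 1) ω ≠ 0 := by
      have := Znum_pos (X := X) n (y - 1) ω
      have := Znum_pos (X := X) n (y + 1) ω
      positivity
    rw [hxy]
    field_simp
  · rw [hF]
    simp [hxy]
end condexp

noncomputable def dYp {Ω : Type*} (X : ℕ → Ω → ℤ) (n : ℕ) (y : ℤ) (ω : Ω) : ℝ :=
  (if X n ω = y ∧ X (n + 1) ω = y + 1 then (1:ℝ) else 0) / Znum X n (y + 1) ω

noncomputable def dYm {Ω : Type*} (X : ℕ → Ω → ℤ) (n : ℕ) (y : ℤ) (ω : Ω) : ℝ :=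
  (if X n ω = y ∧ X (n + 1) ω = y - 1 then (1:ℝ) else 0) / Znum X n (y - 1) ω

noncomputable def dY {Ω : Type*} (X : ℕ → Ω → ℤ) (n : ℕ) (y : ℤ) (ω : Ω) : ℝ :=
  (if X n ω = y then (1:ℝ) else 0) / (Znum X n (y - 1) ω + Znum X n (y + 1) ω)

section mart
variable {Ω : Type*} {m0 : MeasurableSpace Ω} {μ : Measure Ω} [IsProbabilityMeasure μ]
  {ℱ : Filtration ℕ m0} {X : ℕ → Ω → ℤ} {v0 : ℤ}

lemma dYp_mem_Icc (n : ℕ) (y : ℤ) (ω : Ω) : dYp X n y ω ∈ Set.Icc (0:ℝ) 1 :=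
  term_nonneg_le_one (by split <;> simp) (Znum_ge_one _ _ _)

lemma dYm_mem_Icc (n : ℕ) (y : ℤ) (ω : Ω) : dYm X n y ω ∈ Set.Icc (0:ℝ) 1 :=
  term_nonneg_le_one (by split <;> simp) (Znum_ge_one _ _ _)

lemma dY_mem_Icc (n : ℕ) (y : ℤ) (ω : Ω) : dY X n y ω ∈ Set.Icc (0:ℝ) 1 := by
  have h1 := Znum_ge_one (X := X) n (y - 1) ω
  have h2 := Znum_ge_one (X := X) n (y + 1) ω
  exact term_nonneg_le_one (by split <;> simp) (by linarith)

lemma measurable_dYp (hX : Adapted ℱ X) (n : ℕ) (y : ℤ) :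
    Measurable[ℱ (n + 1)] (dYp X n y) :=
  (measurable_ind_and hX (Nat.le_succ n) le_rfl y (y+1)).div
    (measurable_Znum' hX (Nat.le_succ n) (y+1))

lemma measurable_dYm (hX : Adapted ℱ X) (n : ℕ) (y : ℤ) :
    Measurable[ℱ (n + 1)] (dYm X n y) :=
  (measurable_ind_and hX (Nat.le_succ n) le_rfl y (y-1)).div
    (measurable_Znum' hX (Nat.le_succ n) (y-1))

lemma measurable_dY (hX : Adapted ℱ X) (n : ℕ) (y : ℤ) :
    Measurable[ℱ n] (dY X n y) :=
  (measurable_ind hX le_rfl y).div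
    ((measurable_Znum hX n (y-1)).add (measurable_Znum hX n (y+1)))

lemma integrable_dYp (hX : Adapted ℱ X) (n : ℕ) (y : ℤ) : Integrable (dYp X n y) μ :=
  integrable_of_bdd (((measurable_dYp hX n y).mono (ℱ.le _) le_rfl).aestronglyMeasurable)
    (fun ω => by have := dYp_mem_Icc (X := X) n y ω; rw [abs_of_nonneg this.1]; exact this.2)

lemma integrable_dYm (hX : Adapted ℱ X) (n : ℕ) (y : ℤ) : Integrable (dYm X n y) μ :=
  integrable_of_bdd (((measurable_dYm hX n y).mono (ℱ.le _) le_rfl).aestronglyMeasurable)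
    (fun ω => by have := dYm_mem_Icc (X := X) n y ω; rw [abs_of_nonneg this.1]; exact this.2)

lemma integrable_dY (hX : Adapted ℱ X) (n : ℕ) (y : ℤ) : Integrable (dY X n y) μ :=
  integrable_of_bdd (((measurable_dY hX n y).mono (ℱ.le _) le_rfl).aestronglyMeasurable)
    (fun ω => by have := dY_mem_Icc (X := X) n y ω; rw [abs_of_nonneg this.1]; exact this.2)

lemma condexp_dYp (h : IsVRRW μ ℱ X v0) (n : ℕ) (y : ℤ) :
    μ[dYp X n y | ℱ n] =ᵐ[μ] dY X n y := by
  have := condexp_cross h n y 1 (Or.inl rfl)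
  exact this

lemma condexp_dYm (h : IsVRRW μ ℱ X v0) (n : ℕ) (y : ℤ) :
    μ[dYm X n y | ℱ n] =ᵐ[μ] dY X n y := by
  have := condexp_cross h n y (-1) (Or.inr rfl)
  simp only [show y + (-1 : ℤ) = y - 1 from by ring] at this
  exact this

lemma condexp_dY (hX : Adapted ℱ X) (n : ℕ) (y : ℤ) :
    μ[dY X n y | ℱ n] =ᵐ[μ] dY X n y :=
  by rw [condExp_of_stronglyMeasurable (ℱ.le n) (measurable_dY hX n y).stronglyMeasurable
      (integrable_dY (μ := μ) hX n y)]

end mart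

section mart2
variable {Ω : Type*} {m0 : MeasurableSpace Ω} {μ : Measure Ω} [IsProbabilityMeasure μ]
  {ℱ : Filtration ℕ m0} {X : ℕ → Ω → ℤ} {v0 : ℤ}

lemma integrable_sub_aux {A B : Ω → ℝ} (n : ℕ) (hA : Measurable[ℱ n] A)
    (hB : Measurable[ℱ n] B) {C : ℝ}
    (hAb : ∀ ω, 0 ≤ A ω ∧ A ω ≤ C) (hBb : ∀ ω, 0 ≤ B ω ∧ B ω ≤ C) :
    Integrable (fun ω => A ω - B ω) μ := by
  apply integrable_of_bdd (C := 2 * C)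
  · exact ((hA.sub hB).mono (ℱ.le n) le_rfl).aestronglyMeasurable
  · intro ω
    rw [abs_sub_le_iff]
    constructor <;> [skip; skip] <;>
      · have h1 := hAb ω; have h2 := hBb ω; linarith [h1.1, h1.2, h2.1, h2.2]

lemma mart_plus (h : IsVRRW μ ℱ X v0) (y : ℤ) :
    Martingale (fun n ω => Yplus X n y ω - Ynum X n y ω) ℱ μ := by
  have hint : ∀ n, Integrable (fun ω => Yplus X n y ω - Ynum X n y ω) μ := fun n =>
    integrable_sub_aux n (measurable_Yplus h.adapted n y)
      (measurable_Ynum h.adapted n y)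
      (fun ω => ⟨Yplus_nonneg n y ω, Yplus_le n y ω⟩)
      (fun ω => ⟨Ynum_nonneg n y ω, Ynum_le n y ω⟩)
  refine martingale_nat
    (fun n => ((measurable_Yplus h.adapted n y).sub (measurable_Ynum h.adapted n y)).stronglyMeasurable)
    hint (fun n => ?_)
  have hsplit : (fun ω => Yplus X (n + 1) y ω - Ynum X (n + 1) y ω)
      = (fun ω => Yplus X n y ω - Ynum X n y ω) + (dYp X n y - dY X n y) := by
    funext ω
    simp only [Pi.add_apply, Pi.sub_apply, Yplus_succ, Ynum_succ, dYp, dY]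
    ring
  rw [hsplit]
  have h1 := condExp_add (μ := μ) (m := ℱ n) (hint n)
    ((integrable_dYp h.adapted n y).sub (integrable_dY h.adapted n y))
  have h2 := condExp_sub (μ := μ) (m := ℱ n) (integrable_dYp h.adapted n y)
    (integrable_dY h.adapted n y)
  have h3 := condexp_dYp h n y
  have h4 := condexp_dY (μ := μ) h.adapted n y
  have h5 : μ[(fun ω => Yplus X n y ω - Ynum X n y ω) | ℱ n]
      = fun ω => Yplus X n y ω - Ynum X n y ω :=
    condExp_of_stronglyMeasurable (ℱ.le n)
      ((measurable_Yplus h.adapted n y).sub (measurable_Ynum h.adapted n y)).stronglyMeasurable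
      (hint n)
  filter_upwards [h1, h2, h3, h4] with ω e1 e2 e3 e4
  rw [e1, Pi.add_apply, h5, e2, Pi.sub_apply, e3, e4]
  simp

lemma mart_minus (h : IsVRRW μ ℱ X v0) (y : ℤ) :
    Martingale (fun n ω => Yminus X n y ω - Ynum X n y ω) ℱ μ := by
  have hint : ∀ n, Integrable (fun ω => Yminus X n y ω - Ynum X n y ω) μ := fun n =>
    integrable_sub_aux n (measurable_Yminus h.adapted n y)
      (measurable_Ynum h.adapted n y)
      (fun ω => ⟨Yminus_nonneg n y ω, Yminus_le n y ω⟩)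
      (fun ω => ⟨Ynum_nonneg n y ω, Ynum_le n y ω⟩)
  refine martingale_nat
    (fun n => ((measurable_Yminus h.adapted n y).sub (measurable_Ynum h.adapted n y)).stronglyMeasurable)
    hint (fun n => ?_)
  have hsplit : (fun ω => Yminus X (n + 1) y ω - Ynum X (n + 1) y ω)
      = (fun ω => Yminus X n y ω - Ynum X n y ω) + (dYm X n y - dY X n y) := by
    funext ω
    simp only [Pi.add_apply, Pi.sub_apply, Yminus_succ, Ynum_succ, dYm, dY]
    ring
  rw [hsplit]
  have h1 := condExp_add (μ := μ) (m := ℱ n) (hint n)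
    ((integrable_dYm h.adapted n y).sub (integrable_dY h.adapted n y))
  have h2 := condExp_sub (μ := μ) (m := ℱ n) (integrable_dYm h.adapted n y)
    (integrable_dY h.adapted n y)
  have h3 := condexp_dYm h n y
  have h4 := condexp_dY (μ := μ) h.adapted n y
  have h5 : μ[(fun ω => Yminus X n y ω - Ynum X n y ω) | ℱ n]
      = fun ω => Yminus X n y ω - Ynum X n y ω :=
    condExp_of_stronglyMeasurable (ℱ.le n)
      ((measurable_Yminus h.adapted n y).sub (measurable_Ynum h.adapted n y)).stronglyMeasurable
      (hint n)
  filter_upwards [h1, h2, h3, h4] with ω e1 e2 e3 e4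
  rw [e1, Pi.add_apply, h5, e2, Pi.sub_apply, e3, e4]
  simp

end mart2

section events
variable {Ω : Type*} {m0 : MeasurableSpace Ω} {μ : Measure Ω} [IsProbabilityMeasure μ]
  {ℱ : Filtration ℕ m0} {X : ℕ → Ω → ℤ} {v0 : ℤ}

lemma abs_diff_le_one {a b : ℝ} (ha : a ∈ Set.Icc (0:ℝ) 1) (hb : b ∈ Set.Icc (0:ℝ) 1) :
    |a - b| ≤ 1 := by
  rw [abs_sub_le_iff]
  constructor <;> linarith [ha.1, ha.2, hb.1, hb.2]

lemma bdd_incr_plus (y : ℤ) (ω : Ω) (i : ℕ) :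
    |(Yplus X (i+1) y ω - Ynum X (i+1) y ω) - (Yplus X i y ω - Ynum X i y ω)| ≤ 1 := by
  have h : (Yplus X (i+1) y ω - Ynum X (i+1) y ω) - (Yplus X i y ω - Ynum X i y ω)
      = dYp X i y ω - dY X i y ω := by
    simp only [Yplus_succ, Ynum_succ, dYp, dY]; ring
  rw [h]
  exact abs_diff_le_one (dYp_mem_Icc i y ω) (dY_mem_Icc i y ω)

lemma bdd_incr_minus (y : ℤ) (ω : Ω) (i : ℕ) :
    |(Yminus X (i+1) y ω - Ynum X (i+1) y ω) - (Yminus X i y ω - Ynum X i y ω)| ≤ 1 := by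
  have h : (Yminus X (i+1) y ω - Ynum X (i+1) y ω) - (Yminus X i y ω - Ynum X i y ω)
      = dYm X i y ω - dY X i y ω := by
    simp only [Yminus_succ, Ynum_succ, dYm, dY]; ring
  rw [h]
  exact abs_diff_le_one (dYm_mem_Icc i y ω) (dY_mem_Icc i y ω)

/-- On the event that `Ynum` is bounded, `Yplus` converges. -/
lemma ev_plus (h : IsVRRW μ ℱ X v0) (y : ℤ) :
    ∀ᵐ ω ∂μ, BddAbove (Set.range fun n => Ynum X n y ω) →
      ∃ c, Tendsto (fun n => Yplus X n y ω) atTop (nhds c) := by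
  have hm := (mart_plus h y).neg.submartingale
  have hb := hm.bddAbove_iff_exists_tendsto (R := 1)
    (ae_of_all _ fun ω i => by
      simp only [Pi.neg_apply]
      rw [show -(Yplus X (i+1) y ω - Ynum X (i+1) y ω) - -(Yplus X i y ω - Ynum X i y ω)
        = -((Yplus X (i+1) y ω - Ynum X (i+1) y ω) - (Yplus X i y ω - Ynum X i y ω)) from by ring,
        abs_neg]
      exact_mod_cast bdd_incr_plus y ω i)
  filter_upwards [hb] with ω hω hY
  obtain ⟨b, hbb⟩ := hY
  have hbb' : ∀ n, Ynum X n y ω ≤ b := fun n => hbb ⟨n, rfl⟩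
  have h1 : BddAbove (Set.range fun n => (-(fun n ω => Yplus X n y ω - Ynum X n y ω)) n ω) := by
    refine ⟨b, ?_⟩
    rintro r ⟨n, rfl⟩
    show (-(fun n ω => Yplus X n y ω - Ynum X n y ω)) n ω ≤ b
    simp only [Pi.neg_apply]
    have := Yplus_nonneg (X := X) n y ω
    linarith [hbb' n]
  obtain ⟨c, hc⟩ := hω.mp h1
  have hYn : Tendsto (fun n => Ynum X n y ω) atTop (nhds (⨆ n, Ynum X n y ω)) :=
    tendsto_atTop_ciSup (Ynum_mono y ω) ⟨b, by rintro r ⟨n, rfl⟩; exact hbb' n⟩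
  refine ⟨-c + ⨆ n, Ynum X n y ω, ?_⟩
  have : (fun n => Yplus X n y ω)
      = fun n => -((-(fun n ω => Yplus X n y ω - Ynum X n y ω)) n ω) + Ynum X n y ω := by
    funext n; simp only [Pi.neg_apply, neg_neg]; ring
  rw [this]
  exact (hc.neg).add hYn

/-- If `Yminus` at `y` is bounded then `Ynum` at `y` is bounded. -/
lemma ev_minus (h : IsVRRW μ ℱ X v0) (y : ℤ) :
    ∀ᵐ ω ∂μ, BddAbove (Set.range fun n => Yminus X n y ω) →
      BddAbove (Set.range fun n => Ynum X n y ω) := by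
  have hm := (mart_minus h y).submartingale
  have hb := hm.bddAbove_iff_exists_tendsto (R := 1)
    (ae_of_all _ fun ω i => by exact_mod_cast bdd_incr_minus y ω i)
  filter_upwards [hb] with ω hω hY
  obtain ⟨b, hbb⟩ := hY
  have hbb' : ∀ n, Yminus X n y ω ≤ b := fun n => hbb ⟨n, rfl⟩
  have h1 : BddAbove (Set.range fun n => Yminus X n y ω - Ynum X n y ω) := by
    refine ⟨b, ?_⟩
    rintro r ⟨n, rfl⟩
    show Yminus X n y ω - Ynum X n y ω ≤ b
    have := Ynum_nonneg (X := X) n y ω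
    linarith [hbb' n]
  obtain ⟨c, hc⟩ := hω.mp h1
  have hYm : Tendsto (fun n => Yminus X n y ω) atTop (nhds (⨆ n, Yminus X n y ω)) :=
    tendsto_atTop_ciSup (Yminus_mono y ω) ⟨b, by rintro r ⟨n, rfl⟩; exact hbb' n⟩
  have hYn : Tendsto (fun n => Ynum X n y ω) atTop
      (nhds ((⨆ n, Yminus X n y ω) - c)) := by
    have : (fun n => Ynum X n y ω)
        = fun n => Yminus X n y ω - (Yminus X n y ω - Ynum X n y ω) := by
      funext n; ring
    rw [this]
    exact hYm.sub hc
  refine ⟨(⨆ n, Yminus X n y ω) - c, ?_⟩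
  rintro r ⟨n, rfl⟩
  exact Monotone.ge_of_tendsto (Ynum_mono y ω) hYn n

end events

section counting
variable {Ω : Type*} {X : ℕ → Ω → ℤ}

lemma key_frac_ineq {a : ℝ} (ha : 1 ≤ a) : (1 / a) ^ 2 ≤ 2 / a - 2 / (a + 1) := by
  have h0 : (0:ℝ) < a := by linarith
  have h1 : (0:ℝ) < a + 1 := by linarith
  rw [div_sub_div _ _ (ne_of_gt h0) (ne_of_gt h1), div_pow, one_pow,
    div_le_div_iff₀ (by positivity) (by positivity)]
  nlinarith

lemma sum_sq_le (ω : Ω) (v : ℤ) (d : ℕ → ℝ)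
    (hd : ∀ k, d k = 0 ∨ (d k = 1 ∧ X k ω = v)) (n : ℕ) :
    ∑ k ∈ Finset.Icc 1 n, (d k / Znum X (k - 1) v ω) ^ 2
      ≤ 2 / Znum X 0 v ω - 2 / Znum X n v ω := by
  induction n with
  | zero => simp
  | succ n ih =>
    rw [Finset.sum_Icc_succ_top (Nat.le_add_left 1 n)]
    have hstep : (d (n + 1) / Znum X ((n + 1) - 1) v ω) ^ 2
        ≤ 2 / Znum X n v ω - 2 / Znum X (n + 1) v ω := by
      simp only [Nat.add_sub_cancel]
      rcases hd (n + 1) with h0 | ⟨h1, hX⟩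
      · rw [h0]
        have hle : Znum X n v ω ≤ Znum X (n + 1) v ω := by
          rw [Znum_succ]; split <;> simp
        have hpos := Znum_pos (X := X) n v ω
        have hpos' := Znum_pos (X := X) (n + 1) v ω
        simp only [zero_div, ne_eq, OfNat.ofNat_ne_zero, not_false_eq_true, zero_pow]
        have : 2 / Znum X (n + 1) v ω ≤ 2 / Znum X n v ω :=
          div_le_div_of_nonneg_left (by norm_num) hpos hle
        linarith
      · rw [h1]
        have hZ : Znum X (n + 1) v ω = Znum X n v ω + 1 := by
          rw [Znum_succ, if_pos hX]
        rw [hZ]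
        exact key_frac_ineq (Znum_ge_one n v ω)
    linarith
end counting

section Lsq
variable {Ω : Type*} {m0 : MeasurableSpace Ω} {μ : Measure Ω} [IsProbabilityMeasure μ]
  {ℱ : Filtration ℕ m0} {X : ℕ → Ω → ℤ} {v0 : ℤ}

/-- The square sums: `Sm X n z ω = ∑ (increments of Yminus)²`. -/
noncomputable def Smsq (X : ℕ → Ω → ℤ) (n : ℕ) (z : ℤ) (ω : Ω) : ℝ :=
  ∑ k ∈ Finset.Icc 1 n,
    ((if X (k - 1) ω = z ∧ X k ω = z - 1 then (1:ℝ) else 0) / Znum X (k - 1) (z - 1) ω) ^ 2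

noncomputable def Spsq (X : ℕ → Ω → ℤ) (n : ℕ) (z : ℤ) (ω : Ω) : ℝ :=
  ∑ k ∈ Finset.Icc 1 n,
    ((if X (k - 1) ω = z ∧ X k ω = z + 1 then (1:ℝ) else 0) / Znum X (k - 1) (z + 1) ω) ^ 2

lemma Smsq_le_two (n : ℕ) (z : ℤ) (ω : Ω) : Smsq X n z ω ≤ 2 := by
  have h := sum_sq_le (X := X) ω (z - 1)
    (fun k => if X (k - 1) ω = z ∧ X k ω = z - 1 then (1:ℝ) else 0)
    (fun k => by split <;> [right; left] <;> simp_all) n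
  refine le_trans h ?_
  have h1 := Znum_ge_one (X := X) 0 (z - 1) ω
  have h2 := Znum_pos (X := X) n (z - 1) ω
  have : 2 / Znum X 0 (z - 1) ω ≤ 2 := by
    rw [div_le_iff₀ (by linarith)]; linarith
  have : 0 < 2 / Znum X n (z - 1) ω := by positivity
  linarith

lemma Spsq_le_two (n : ℕ) (z : ℤ) (ω : Ω) : Spsq X n z ω ≤ 2 := by
  have h := sum_sq_le (X := X) ω (z + 1)
    (fun k => if X (k - 1) ω = z ∧ X k ω = z + 1 then (1:ℝ) else 0)
    (fun k => by split <;> [right; left] <;> simp_all) n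
  refine le_trans h ?_
  have h1 := Znum_ge_one (X := X) 0 (z + 1) ω
  have h2 := Znum_pos (X := X) n (z + 1) ω
  have : 2 / Znum X 0 (z + 1) ω ≤ 2 := by
    rw [div_le_iff₀ (by linarith)]; linarith
  have : 0 < 2 / Znum X n (z + 1) ω := by positivity
  linarith

lemma Smsq_succ (n : ℕ) (z : ℤ) (ω : Ω) :
    Smsq X (n + 1) z ω = Smsq X n z ω + (dYm X n z ω) ^ 2 := by
  unfold Smsq dYm
  rw [Finset.sum_Icc_succ_top (Nat.le_add_left 1 n)]
  simp

lemma Spsq_succ (n : ℕ) (z : ℤ) (ω : Ω) :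
    Spsq X (n + 1) z ω = Spsq X n z ω + (dYp X n z ω) ^ 2 := by
  unfold Spsq dYp
  rw [Finset.sum_Icc_succ_top (Nat.le_add_left 1 n)]
  simp

lemma Smsq_nonneg (n : ℕ) (z : ℤ) (ω : Ω) : 0 ≤ Smsq X n z ω :=
  Finset.sum_nonneg fun k _ => sq_nonneg _

lemma Spsq_nonneg (n : ℕ) (z : ℤ) (ω : Ω) : 0 ≤ Spsq X n z ω :=
  Finset.sum_nonneg fun k _ => sq_nonneg _

end Lsq

section Lsq2
variable {Ω : Type*} {m0 : MeasurableSpace Ω} {μ : Measure Ω} [IsProbabilityMeasure μ]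
  {ℱ : Filtration ℕ m0} {X : ℕ → Ω → ℤ} {v0 : ℤ}

lemma measurable_Smsq (hX : Adapted ℱ X) (n : ℕ) (z : ℤ) :
    Measurable[ℱ n] (Smsq X n z) := by
  apply Finset.measurable_sum
  intro k hk
  have hk2 : k ≤ n := (Finset.mem_Icc.mp hk).2
  have hk' : k - 1 ≤ n := le_trans (Nat.sub_le k 1) hk2
  exact ((measurable_ind_and hX hk' hk2 z (z-1)).div (measurable_Znum' hX hk' (z-1))).pow
    measurable_const

lemma measurable_Spsq (hX : Adapted ℱ X) (n : ℕ) (z : ℤ) :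
    Measurable[ℱ n] (Spsq X n z) := by
  apply Finset.measurable_sum
  intro k hk
  have hk2 : k ≤ n := (Finset.mem_Icc.mp hk).2
  have hk' : k - 1 ≤ n := le_trans (Nat.sub_le k 1) hk2
  exact ((measurable_ind_and hX hk' hk2 z (z+1)).div (measurable_Znum' hX hk' (z+1))).pow
    measurable_const

lemma g_sq_integral_le (h : IsVRRW μ ℱ X v0) (z : ℤ) (n : ℕ) :
    ∫ ω, (Yminus X n z ω - Yplus X n z ω) ^ 2 ∂μ ≤ 4 := by
  have hgmeas : ∀ m : ℕ, Measurable[ℱ m] (fun ω => Yminus X m z ω - Yplus X m z ω) :=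
    fun m => (measurable_Yminus h.adapted m z).sub (measurable_Yplus h.adapted m z)
  have hgbd : ∀ (m : ℕ) ω, |Yminus X m z ω - Yplus X m z ω| ≤ m := fun m ω => by
    rw [abs_sub_le_iff]
    constructor <;>
      linarith [Yminus_nonneg (X := X) m z ω, Yminus_le (X := X) m z ω,
        Yplus_nonneg (X := X) m z ω, Yplus_le (X := X) m z ω]
  have hgint : ∀ m : ℕ, Integrable (fun ω => Yminus X m z ω - Yplus X m z ω) μ := fun m =>
    integrable_of_bdd (((hgmeas m).mono (ℱ.le m) le_rfl).aestronglyMeasurable) (hgbd m)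
  have hgsqint : ∀ m : ℕ, Integrable (fun ω => (Yminus X m z ω - Yplus X m z ω) ^ 2) μ := by
    intro m
    apply integrable_of_bdd (C := (m : ℝ) ^ 2)
    · exact (((hgmeas m).mono (ℱ.le m) le_rfl).pow measurable_const).aestronglyMeasurable
    · intro ω
      rw [abs_of_nonneg (sq_nonneg _), ← sq_abs (Yminus X m z ω - Yplus X m z ω)]
      have := hgbd m ω
      have h0 := abs_nonneg (Yminus X m z ω - Yplus X m z ω)
      nlinarith
  have hSint : ∀ m : ℕ, Integrable (fun ω => Smsq X m z ω + Spsq X m z ω) μ := by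
    intro m
    apply integrable_of_bdd (C := (4:ℝ))
    · exact (((measurable_Smsq h.adapted m z).add (measurable_Spsq h.adapted m z)).mono
        (ℱ.le m) le_rfl).aestronglyMeasurable
    · intro ω
      have hnn : (0:ℝ) ≤ Smsq X m z ω + Spsq X m z ω :=
        add_nonneg (Smsq_nonneg m z ω) (Spsq_nonneg m z ω)
      rw [abs_of_nonneg hnn]
      linarith [Smsq_le_two (X := X) m z ω, Spsq_le_two (X := X) m z ω]
  have hdint : ∀ m : ℕ, Integrable (fun ω => dYm X m z ω ^ 2 + dYp X m z ω ^ 2) μ := by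
    intro m
    apply integrable_of_bdd (C := (2:ℝ))
    · exact ((((measurable_dYm h.adapted m z).pow measurable_const).add
        ((measurable_dYp h.adapted m z).pow measurable_const)).mono
          (ℱ.le (m+1)) le_rfl).aestronglyMeasurable
    · intro ω
      have h1 := dYm_mem_Icc (X := X) m z ω
      have h2 := dYp_mem_Icc (X := X) m z ω
      rw [abs_of_nonneg (by positivity)]
      nlinarith [h1.1, h1.2, h2.1, h2.2]
  have hkey : ∀ m : ℕ, ∫ ω, (Yminus X m z ω - Yplus X m z ω) ^ 2 ∂μ
      ≤ ∫ ω, (Smsq X m z ω + Spsq X m z ω) ∂μ := by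
    intro m
    induction m with
    | zero =>
      have hz : ∀ ω, Yminus X 0 z ω - Yplus X 0 z ω = 0 := by
        intro ω; unfold Yminus Yplus; simp
      have hz2 : ∀ ω, Smsq X 0 z ω + Spsq X 0 z ω = 0 := by
        intro ω; unfold Smsq Spsq; simp
      rw [show (fun ω => (Yminus X 0 z ω - Yplus X 0 z ω) ^ 2) = fun _ => (0:ℝ) from
        funext fun ω => by rw [hz ω]; ring]
      rw [show (fun ω => Smsq X 0 z ω + Spsq X 0 z ω) = fun _ => (0:ℝ) from
        funext fun ω => hz2 ω]
    | succ n ih =>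
      have hΔdef : ∀ ω, Yminus X (n+1) z ω - Yplus X (n+1) z ω
          = (Yminus X n z ω - Yplus X n z ω) + (dYm X n z ω - dYp X n z ω) := by
        intro ω
        simp only [Yminus_succ, Yplus_succ, dYm, dYp]
        ring
      have hcross0 : ∀ ω, dYm X n z ω * dYp X n z ω = 0 := by
        intro ω
        unfold dYm dYp
        by_cases h1 : X n ω = z ∧ X (n+1) ω = z - 1
        · by_cases h2 : X n ω = z ∧ X (n+1) ω = z + 1
          · exfalso; have := h1.2; have := h2.2; omega
          · rw [if_neg h2]; simp
        · rw [if_neg h1]; simp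
      have hΔint : Integrable (fun ω => dYm X n z ω - dYp X n z ω) μ :=
        (integrable_dYm h.adapted n z).sub (integrable_dYp h.adapted n z)
      have hprodint : Integrable
          ((fun ω => Yminus X n z ω - Yplus X n z ω) * (fun ω => dYm X n z ω - dYp X n z ω)) μ := by
        apply integrable_of_bdd (C := (n : ℝ) * 1)
        · exact (((hgmeas n).mono (ℱ.le n) le_rfl).mul
            (((measurable_dYm h.adapted n z).sub (measurable_dYp h.adapted n z)).mono
              (ℱ.le (n+1)) le_rfl)).aestronglyMeasurable
        · intro ω
          rw [Pi.mul_apply, abs_mul]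
          apply mul_le_mul (hgbd n ω) _ (abs_nonneg _) (Nat.cast_nonneg n)
          exact abs_diff_le_one (dYm_mem_Icc n z ω) (dYp_mem_Icc n z ω)
      have horth : ∫ ω, (Yminus X n z ω - Yplus X n z ω) * (dYm X n z ω - dYp X n z ω) ∂μ = 0 := by
        have hmul := condExp_mul_of_stronglyMeasurable_left (m := ℱ n) (μ := μ)
          ((hgmeas n).stronglyMeasurable) hprodint hΔint
        have hΔ0 : μ[(fun ω => dYm X n z ω - dYp X n z ω) | ℱ n] =ᵐ[μ] 0 := by
          refine (condExp_sub (integrable_dYm h.adapted n z)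
            (integrable_dYp h.adapted n z) (ℱ n)).trans ?_
          filter_upwards [condexp_dYm h n z, condexp_dYp h n z] with ω e1 e2
          simp only [Pi.sub_apply, e1, e2, Pi.zero_apply, sub_self]
        have hzero : μ[(fun ω => Yminus X n z ω - Yplus X n z ω) *
            (fun ω => dYm X n z ω - dYp X n z ω) | ℱ n] =ᵐ[μ] 0 := by
          refine hmul.trans ?_
          filter_upwards [hΔ0] with ω e
          simp only [Pi.mul_apply, e, Pi.zero_apply, mul_zero]
        calc ∫ ω, (Yminus X n z ω - Yplus X n z ω) * (dYm X n z ω - dYp X n z ω) ∂μ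
            = ∫ ω, ((fun ω => Yminus X n z ω - Yplus X n z ω) *
              (fun ω => dYm X n z ω - dYp X n z ω)) ω ∂μ := by rfl
          _ = ∫ ω, (μ[(fun ω => Yminus X n z ω - Yplus X n z ω) *
              (fun ω => dYm X n z ω - dYp X n z ω) | ℱ n]) ω ∂μ :=
            (integral_condExp (ℱ.le n)).symm
          _ = 0 := integral_eq_zero_of_ae hzero
      have hexpand : (fun ω => (Yminus X (n+1) z ω - Yplus X (n+1) z ω) ^ 2)
          = fun ω => (Yminus X n z ω - Yplus X n z ω) ^ 2
            + (2 * ((Yminus X n z ω - Yplus X n z ω) * (dYm X n z ω - dYp X n z ω))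
              + (dYm X n z ω ^ 2 + dYp X n z ω ^ 2)) := by
        funext ω
        rw [hΔdef ω]
        linear_combination (-2 : ℝ) * hcross0 ω
      rw [hexpand]
      have hprodint2 : Integrable (fun ω =>
          2 * ((Yminus X n z ω - Yplus X n z ω) * (dYm X n z ω - dYp X n z ω))) μ :=
        hprodint.const_mul 2
      have hint2 : Integrable (fun ω =>
          2 * ((Yminus X n z ω - Yplus X n z ω) * (dYm X n z ω - dYp X n z ω))
            + (dYm X n z ω ^ 2 + dYp X n z ω ^ 2)) μ :=
        hprodint2.add (hdint n)
      rw [integral_add (hgsqint n) hint2, integral_add hprodint2 (hdint n)]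
      have h2 : ∫ ω, 2 * ((Yminus X n z ω - Yplus X n z ω) * (dYm X n z ω - dYp X n z ω)) ∂μ
          = 0 := by
        rw [integral_const_mul, horth, mul_zero]
      rw [h2]
      have hSsucc : ∫ ω, (Smsq X (n+1) z ω + Spsq X (n+1) z ω) ∂μ
          = ∫ ω, (Smsq X n z ω + Spsq X n z ω) ∂μ + ∫ ω, (dYm X n z ω ^ 2 + dYp X n z ω ^ 2) ∂μ := by
        rw [← integral_add (hSint n) (hdint n)]
        apply integral_congr_ae
        apply ae_of_all
        intro ω
        simp only [Smsq_succ, Spsq_succ]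
        ring
      rw [hSsucc]
      linarith
  refine le_trans (hkey n) ?_
  have : ∫ ω, (Smsq X n z ω + Spsq X n z ω) ∂μ ≤ ∫ _ω, (4:ℝ) ∂μ := by
    apply integral_mono (hSint n) (integrable_const 4)
    intro ω
    exact le_trans (add_le_add (Smsq_le_two n z ω) (Spsq_le_two n z ω)) (by norm_num)
  simpa using this

end Lsq2

section evdiff
variable {Ω : Type*} {m0 : MeasurableSpace Ω} {μ : Measure Ω} [IsProbabilityMeasure μ]
  {ℱ : Filtration ℕ m0} {X : ℕ → Ω → ℤ} {v0 : ℤ}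

lemma ev_diff (h : IsVRRW μ ℱ X v0) (z : ℤ) :
    ∀ᵐ ω ∂μ, ∃ c, Tendsto (fun n => Yminus X n z ω - Yplus X n z ω) atTop (nhds c) := by
  have hmart : Martingale (fun n ω => Yminus X n z ω - Yplus X n z ω) ℱ μ := by
    have heq : (fun (n : ℕ) (ω : Ω) => Yminus X n z ω - Yplus X n z ω)
        = (fun n ω => Yminus X n z ω - Ynum X n z ω) - (fun n ω => Yplus X n z ω - Ynum X n z ω) := by
      funext n ω
      simp only [Pi.sub_apply]
      ring
    rw [heq]
    exact (mart_minus h z).sub (mart_plus h z)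
  have hgmeas : ∀ m : ℕ, Measurable[ℱ m] (fun ω => Yminus X m z ω - Yplus X m z ω) :=
    fun m => (measurable_Yminus h.adapted m z).sub (measurable_Yplus h.adapted m z)
  have hgbd : ∀ (m : ℕ) ω, |Yminus X m z ω - Yplus X m z ω| ≤ m := fun m ω => by
    rw [abs_sub_le_iff]
    constructor <;>
      linarith [Yminus_nonneg (X := X) m z ω, Yminus_le (X := X) m z ω,
        Yplus_nonneg (X := X) m z ω, Yplus_le (X := X) m z ω]
  have hgint : ∀ m : ℕ, Integrable (fun ω => Yminus X m z ω - Yplus X m z ω) μ := fun m =>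
    integrable_of_bdd (((hgmeas m).mono (ℱ.le m) le_rfl).aestronglyMeasurable) (hgbd m)
  have habs_int : ∀ m : ℕ, ∫ ω, |Yminus X m z ω - Yplus X m z ω| ∂μ ≤ 3 := by
    intro m
    have hib : Integrable (fun ω => (1 + (Yminus X m z ω - Yplus X m z ω) ^ 2) / 2) μ := by
      apply integrable_of_bdd (C := (1 + (m:ℝ)^2) / 2)
      · exact ((measurable_const.add (((hgmeas m).mono (ℱ.le m) le_rfl).pow
          measurable_const)).div_const 2).aestronglyMeasurable
      · intro ω
        have h1 : (0:ℝ) ≤ (Yminus X m z ω - Yplus X m z ω) ^ 2 := sq_nonneg _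
        have h2 : (Yminus X m z ω - Yplus X m z ω) ^ 2 ≤ (m:ℝ)^2 := by
          rw [← sq_abs (Yminus X m z ω - Yplus X m z ω)]
          have := hgbd m ω
          have h0 := abs_nonneg (Yminus X m z ω - Yplus X m z ω)
          nlinarith
        rw [abs_of_nonneg (by positivity)]
        linarith
    have h1 : ∫ ω, |Yminus X m z ω - Yplus X m z ω| ∂μ
        ≤ ∫ ω, (1 + (Yminus X m z ω - Yplus X m z ω) ^ 2) / 2 ∂μ := by
      apply integral_mono (hgint m).abs hib
      intro ω
      have h2 : (|Yminus X m z ω - Yplus X m z ω| - 1) ^ 2 ≥ 0 := sq_nonneg _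
      have h3 : |Yminus X m z ω - Yplus X m z ω| ^ 2 = (Yminus X m z ω - Yplus X m z ω) ^ 2 :=
        sq_abs _
      nlinarith
    refine le_trans h1 ?_
    have h4 : ∫ ω, (1 + (Yminus X m z ω - Yplus X m z ω) ^ 2) / 2 ∂μ
        = (∫ ω, (1 + (Yminus X m z ω - Yplus X m z ω) ^ 2) ∂μ) / 2 := integral_div 2 _
    rw [h4]
    have hsqint : Integrable (fun ω => (Yminus X m z ω - Yplus X m z ω) ^ 2) μ := by
      apply integrable_of_bdd (C := (m:ℝ)^2)
      · exact (((hgmeas m).mono (ℱ.le m) le_rfl).pow measurable_const).aestronglyMeasurable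
      · intro ω
        rw [abs_of_nonneg (sq_nonneg _), ← sq_abs (Yminus X m z ω - Yplus X m z ω)]
        have := hgbd m ω
        have h0 := abs_nonneg (Yminus X m z ω - Yplus X m z ω)
        nlinarith
    rw [integral_add (integrable_const 1) hsqint]
    have h5 := g_sq_integral_le h z m
    simp only [integral_const, measure_univ, ENNReal.toReal_one, smul_eq_mul, one_mul, probReal_univ]
    linarith
  have hbdd : ∀ m : ℕ, eLpNorm (fun ω => Yminus X m z ω - Yplus X m z ω) 1 μ ≤ (3 : NNReal) := by
    intro m
    rw [eLpNorm_one_eq_lintegral_enorm,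
      ← ofReal_integral_norm_eq_lintegral_enorm (hgint m)]
    refine le_trans (ENNReal.ofReal_le_ofReal
      (show ∫ ω, ‖Yminus X m z ω - Yplus X m z ω‖ ∂μ ≤ (3:ℝ) from by
        simpa [Real.norm_eq_abs] using habs_int m)) ?_
    rw [show ((3 : NNReal) : ENNReal) = ENNReal.ofReal (3:ℝ) from by
      simp [ENNReal.ofReal]]
  exact hmart.submartingale.exists_ae_tendsto_of_bdd hbdd

end evdiff

section logsec
variable {Ω : Type*} {X : ℕ → Ω → ℤ}

lemma log_one_add_lb {u : ℝ} (hu : 0 ≤ u) : u - u ^ 2 ≤ Real.log (1 + u) := by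
  have h1 : (0:ℝ) < 1 + u := by linarith
  have h2 := Real.log_le_sub_one_of_pos (show (0:ℝ) < (1 + u)⁻¹ by positivity)
  rw [Real.log_inv] at h2
  have h3 : 1 - (1 + u)⁻¹ ≤ Real.log (1 + u) := by linarith
  refine le_trans ?_ h3
  have h4 : 1 - (1 + u)⁻¹ = u / (1 + u) := by field_simp; ring
  rw [h4, le_div_iff₀ h1]
  nlinarith

lemma log_lemma (ω : Ω)
    (hnn : ∀ k : ℕ, X (k + 1) ω = X k ω + 1 ∨ X (k + 1) ω = X k ω - 1) (v : ℤ) :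
    ∃ c, Tendsto (fun n => Real.log (Znum X n v ω)
      - (Yplus X n (v - 1) ω + Yminus X n (v + 1) ω)) atTop (nhds c) := by
  set D : ℕ → ℝ := fun n => Real.log (Znum X n v ω)
    - (Yplus X n (v - 1) ω + Yminus X n (v + 1) ω) with hDdef
  set a : ℕ → ℝ := fun n => (if X (n + 1) ω = v then (1:ℝ) else 0) / Znum X n v ω with hadef
  have ha_nonneg : ∀ n, 0 ≤ a n := fun n => by
    have := Znum_pos (X := X) n v ω
    simp only [hadef]
    split <;> positivity
  have hD : ∀ n, D (n + 1) = D n + (Real.log (1 + a n) - a n) := by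
    intro n
    have hZpos := Znum_pos (X := X) n v ω
    have hlog : Real.log (Znum X (n + 1) v ω)
        = Real.log (Znum X n v ω) + Real.log (1 + a n) := by
      have hmul : Znum X (n + 1) v ω = Znum X n v ω * (1 + a n) := by
        rw [Znum_succ]
        simp only [hadef]
        field_simp
      rw [hmul, Real.log_mul (ne_of_gt hZpos) (by
        have := ha_nonneg n
        positivity)]
    have hYp : Yplus X (n + 1) (v - 1) ω = Yplus X n (v - 1) ω
        + (if X n ω = v - 1 ∧ X (n + 1) ω = v then (1:ℝ) else 0) / Znum X n v ω := by
      rw [Yplus_succ]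
      simp only [show v - 1 + 1 = v from by ring]
    have hYm : Yminus X (n + 1) (v + 1) ω = Yminus X n (v + 1) ω
        + (if X n ω = v + 1 ∧ X (n + 1) ω = v then (1:ℝ) else 0) / Znum X n v ω := by
      rw [Yminus_succ]
      simp only [show v + 1 - 1 = v from by ring]
    have hind : (if X n ω = v - 1 ∧ X (n + 1) ω = v then (1:ℝ) else 0)
        + (if X n ω = v + 1 ∧ X (n + 1) ω = v then (1:ℝ) else 0)
        = (if X (n + 1) ω = v then (1:ℝ) else 0) := by
      by_cases hv : X (n + 1) ω = v
      · rcases hnn n with h1 | h1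
        · have hx : X n ω = v - 1 := by omega
          have hx' : ¬(X n ω = v + 1) := by omega
          simp [hx, hx', hv, show ¬(v - 1 = v + 1) from by omega]
        · have hx : X n ω = v + 1 := by omega
          have hx' : ¬(X n ω = v - 1) := by omega
          simp [hx, hx', hv, show ¬(v + 1 = v - 1) from by omega]
      · simp [hv]
    have hsum : (if X n ω = v - 1 ∧ X (n + 1) ω = v then (1:ℝ) else 0) / Znum X n v ω
        + (if X n ω = v + 1 ∧ X (n + 1) ω = v then (1:ℝ) else 0) / Znum X n v ω = a n := by
      rw [← add_div, hind]
    simp only [hDdef]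
    rw [hlog, hYp, hYm]
    rw [← hsum]
    ring
  have hanti : Antitone D := by
    apply antitone_nat_of_succ_le
    intro n
    rw [hD n]
    have h1 := ha_nonneg n
    have h2 : Real.log (1 + a n) ≤ a n := by
      have := Real.log_le_sub_one_of_pos (show (0:ℝ) < 1 + a n by linarith)
      linarith
    linarith
  have hsq : ∀ n, ∑ k ∈ Finset.Icc 1 n,
      ((if X k ω = v then (1:ℝ) else 0) / Znum X (k - 1) v ω) ^ 2 ≤ 2 := by
    intro n
    have h := sum_sq_le (X := X) ω v (fun k => if X k ω = v then (1:ℝ) else 0)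
      (fun k => by split <;> [right; left] <;> simp_all) n
    refine le_trans h ?_
    have h1 := Znum_ge_one (X := X) 0 v ω
    have h2 := Znum_pos (X := X) n v ω
    have h3 : 2 / Znum X 0 v ω ≤ 2 := by
      rw [div_le_iff₀ (by linarith)]; linarith
    have h4 : 0 < 2 / Znum X n v ω := by positivity
    linarith
  have hlb : ∀ n, D 0 - 2 ≤ D n := by
    have key : ∀ n, D 0 - (∑ k ∈ Finset.Icc 1 n,
        ((if X k ω = v then (1:ℝ) else 0) / Znum X (k - 1) v ω) ^ 2) ≤ D n := by
      intro n
      induction n with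
      | zero => simp
      | succ n ih =>
        rw [hD n, Finset.sum_Icc_succ_top (Nat.le_add_left 1 n)]
        have hterm : ((if X (n + 1) ω = v then (1:ℝ) else 0) / Znum X ((n+1) - 1) v ω) ^ 2
            = a n ^ 2 := by
          simp only [Nat.add_sub_cancel, hadef]
        rw [hterm]
        have hlog := log_one_add_lb (ha_nonneg n)
        linarith
    intro n
    have h1 := key n
    have h2 := hsq n
    set S := ∑ k ∈ Finset.Icc 1 n,
      ((if X k ω = v then (1:ℝ) else 0) / Znum X (k - 1) v ω) ^ 2 with hS
    linarith
  refine ⟨⨅ n, D n, tendsto_atTop_ciInf hanti ⟨D 0 - 2, ?_⟩⟩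
  rintro r ⟨n, rfl⟩
  exact hlb n

end logsec


/-- Corollary 3.1(ii)–(iii) of Tarrès: a.s. on `Υ(x)`, the limit
`α⁻_∞(x+2) = lim_n α⁻_n(x+2)` exists and lies in `[0,1)`; moreover on
`Υ(x) ∩ {α⁻_∞(x+2) > 0}` the event `Υ(x+4)` holds. -/
theorem alphaMinus_limit_and_propagation
    {Ω : Type*} {m0 : MeasurableSpace Ω} (μ : Measure Ω) [IsProbabilityMeasure μ]
    (ℱ : Filtration ℕ m0) (X : ℕ → Ω → ℤ) (v0 : ℤ) (h : IsVRRW μ ℱ X v0) (x : ℤ) :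
    ∀ᵐ ω ∂μ, ω ∈ Upsilon X x →
      ∃ l : ℝ, l ∈ Set.Ico (0 : ℝ) 1 ∧
        Tendsto (fun n => alphaMinus X n (x + 2) ω) atTop (nhds l) ∧
        (0 < l → ω ∈ Upsilon X (x + 4)) := by
  have hnn : ∀ᵐ ω ∂μ, ∀ k : ℕ, X (k + 1) ω = X k ω + 1 ∨ X (k + 1) ω = X k ω - 1 :=
    ae_all_iff.mpr h.nearest
  filter_upwards [hnn, ev_plus h x, ev_diff h (x + 2), ev_minus h (x + 4)]
    with ω hnnω hplusω hdiffω hminusω hups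
  have hupsB : BddAbove (Set.range fun n => Ynum X n x ω) := hups
  obtain ⟨p, hp⟩ := hplusω hupsB
  obtain ⟨b, hbt⟩ := hdiffω
  obtain ⟨d1, hd1⟩ := log_lemma ω hnnω (x + 1)
  obtain ⟨d2, hd2⟩ := log_lemma ω hnnω (x + 3)
  simp only [show x + 1 - 1 = x from by ring, show x + 1 + 1 = x + 2 from by ring] at hd1
  simp only [show x + 3 - 1 = x + 2 from by ring, show x + 3 + 1 = x + 4 from by ring] at hd2
  have hcomb : Tendsto (fun n => Real.log (Znum X n (x + 3) ω) - Real.log (Znum X n (x + 1) ω)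
      - Yminus X n (x + 4) ω) atTop (nhds (d2 - d1 - p - b)) := by
    have heq : (fun n => Real.log (Znum X n (x + 3) ω) - Real.log (Znum X n (x + 1) ω)
        - Yminus X n (x + 4) ω)
        = fun n => (Real.log (Znum X n (x + 3) ω) - (Yplus X n (x + 2) ω + Yminus X n (x + 4) ω))
          - (Real.log (Znum X n (x + 1) ω) - (Yplus X n x ω + Yminus X n (x + 2) ω))
          - Yplus X n x ω - (Yminus X n (x + 2) ω - Yplus X n (x + 2) ω) := by
      funext n; ring
    rw [heq]
    exact ((hd2.sub hd1).sub hp).sub hbt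
  have hZ1pos : ∀ n, 0 < Znum X n (x + 1) ω := fun n => Znum_pos n (x + 1) ω
  have hZ3pos : ∀ n, 0 < Znum X n (x + 3) ω := fun n => Znum_pos n (x + 3) ω
  have halpha : ∀ n, alphaMinus X n (x + 2) ω
      = 1 / (1 + Znum X n (x + 3) ω / Znum X n (x + 1) ω) := by
    intro n
    unfold alphaMinus
    rw [show x + 2 - 1 = x + 1 from by ring, show x + 2 + 1 = x + 3 from by ring]
    have hden : 1 + Znum X n (x + 3) ω / Znum X n (x + 1) ω
        = (Znum X n (x + 1) ω + Znum X n (x + 3) ω) / Znum X n (x + 1) ω := by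
      rw [eq_div_iff (ne_of_gt (hZ1pos n)), add_mul, one_mul,
        div_mul_cancel₀ _ (ne_of_gt (hZ1pos n))]
    rw [hden, one_div_div]
  have hrpos : ∀ n, 0 < Znum X n (x + 3) ω / Znum X n (x + 1) ω :=
    fun n => div_pos (hZ3pos n) (hZ1pos n)
  have hlogr : ∀ n, Real.log (Znum X n (x + 3) ω / Znum X n (x + 1) ω)
      = Real.log (Znum X n (x + 3) ω) - Real.log (Znum X n (x + 1) ω) :=
    fun n => Real.log_div (ne_of_gt (hZ3pos n)) (ne_of_gt (hZ1pos n))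
  by_cases hB : BddAbove (Set.range fun n => Yminus X n (x + 4) ω)
  · -- `Yminus` at `x+4` converges
    have hYm4 : Tendsto (fun n => Yminus X n (x + 4) ω) atTop
        (nhds (⨆ n, Yminus X n (x + 4) ω)) :=
      tendsto_atTop_ciSup (Yminus_mono _ ω) hB
    have hlog : Tendsto (fun n => Real.log (Znum X n (x + 3) ω / Znum X n (x + 1) ω)) atTop
        (nhds (d2 - d1 - p - b + ⨆ n, Yminus X n (x + 4) ω)) := by
      have heq : (fun n => Real.log (Znum X n (x + 3) ω / Znum X n (x + 1) ω))
          = fun n => (Real.log (Znum X n (x + 3) ω) - Real.log (Znum X n (x + 1) ω)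
            - Yminus X n (x + 4) ω) + Yminus X n (x + 4) ω := by
        funext n; rw [hlogr n]; ring
      rw [heq]
      exact hcomb.add hYm4
    set L := Real.exp (d2 - d1 - p - b + ⨆ n, Yminus X n (x + 4) ω) with hL
    have hLpos : 0 < L := Real.exp_pos _
    have hrt : Tendsto (fun n => Znum X n (x + 3) ω / Znum X n (x + 1) ω) atTop (nhds L) := by
      have heq : (fun n => Znum X n (x + 3) ω / Znum X n (x + 1) ω)
          = fun n => Real.exp (Real.log (Znum X n (x + 3) ω / Znum X n (x + 1) ω)) :=
        funext fun n => (Real.exp_log (hrpos n)).symm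
      rw [heq, hL]
      exact (Real.continuous_exp.tendsto _).comp hlog
    refine ⟨1 / (1 + L), ⟨by positivity, ?_⟩, ?_, fun _ => ?_⟩
    · rw [div_lt_one (by linarith)]
      linarith
    · have heq : (fun n => alphaMinus X n (x + 2) ω)
          = fun n => 1 / (1 + Znum X n (x + 3) ω / Znum X n (x + 1) ω) :=
        funext halpha
      rw [heq]
      exact (tendsto_const_nhds (x := (1:ℝ))).div (tendsto_const_nhds.add hrt)
        (by linarith)
    · exact hminusω hB
  · -- `Yminus` at `x+4` tends to infinity
    have hYm4 : Tendsto (fun n => Yminus X n (x + 4) ω) atTop atTop :=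
      tendsto_atTop_atTop_of_monotone' (Yminus_mono _ ω) hB
    have hlogtop : Tendsto (fun n => Real.log (Znum X n (x + 3) ω / Znum X n (x + 1) ω))
        atTop atTop := by
      have heq : (fun n => Real.log (Znum X n (x + 3) ω / Znum X n (x + 1) ω))
          = fun n => (Real.log (Znum X n (x + 3) ω) - Real.log (Znum X n (x + 1) ω)
            - Yminus X n (x + 4) ω) + Yminus X n (x + 4) ω := by
        funext n; rw [hlogr n]; ring
      rw [heq]
      exact hcomb.add_atTop hYm4
    have hrtop : Tendsto (fun n => Znum X n (x + 3) ω / Znum X n (x + 1) ω) atTop atTop := by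
      have heq : (fun n => Znum X n (x + 3) ω / Znum X n (x + 1) ω)
          = fun n => Real.exp (Real.log (Znum X n (x + 3) ω / Znum X n (x + 1) ω)) :=
        funext fun n => (Real.exp_log (hrpos n)).symm
      rw [heq]
      exact Real.tendsto_exp_atTop.comp hlogtop
    refine ⟨0, ⟨le_rfl, zero_lt_one⟩, ?_, fun h0 => absurd h0 (lt_irrefl 0)⟩
    have heq : (fun n => alphaMinus X n (x + 2) ω)
        = fun n => (1 + Znum X n (x + 3) ω / Znum X n (x + 1) ω)⁻¹ := by
      funext n; rw [halpha n, one_div]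
    rw [heq]
    exact (tendsto_const_nhds.add_atTop hrtop).inv_tendsto_atTop
end

section
/- For the VRRW on ℤ and any x ∈ ℤ, almost surely ln Z_n(x) - (Y^+_n(x-1) + Y^-_n(x+1)) is eventually constant up to an error O(Z_n(x)^{-1}); i.e., the logarithm of the occupation of x is the sum of the weighted crossing counts into x from both sides, modulo a convergent correction. -/
open MeasureTheory Filter

noncomputable def Hsum (m : ℕ) : ℝ := ∑ j ∈ Finset.range m, (1 : ℝ) / (j + 1)

noncomputable def gfun (m : ℕ) : ℝ := Hsum m - Real.log (m + 1)

lemma gfun_succ_sub (m : ℕ) :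
    gfun (m + 1) - gfun m = 1 / (m + 1) - Real.log ((m + 2) / (m + 1)) := by
  have h1 : ((m : ℝ) + 1) ≠ 0 := by positivity
  have h2 : (0:ℝ) < (m : ℝ) + 2 := by positivity
  simp only [gfun, Hsum, Finset.sum_range_succ]
  rw [Real.log_div (by positivity) h1]
  push_cast
  have hc : ((m:ℝ) + 1) + 1 = (m:ℝ) + 2 := by ring
  rw [hc]
  ring

lemma gfun_mono : Monotone gfun := by
  apply monotone_nat_of_le_succ
  intro m
  have h := gfun_succ_sub m
  have hlog : Real.log (((m:ℝ) + 2) / ((m:ℝ) + 1)) ≤ 1 / ((m:ℝ) + 1) := by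
    have := Real.log_le_sub_one_of_pos (x := ((m:ℝ) + 2) / ((m:ℝ) + 1)) (by positivity)
    have h1 : ((m : ℝ) + 1) ≠ 0 := by positivity
    calc Real.log (((m:ℝ) + 2) / ((m:ℝ) + 1)) ≤ ((m:ℝ) + 2) / ((m:ℝ) + 1) - 1 := this
    _ = 1 / ((m:ℝ) + 1) := by field_simp; ring
  linarith

lemma gfun_tail (m M : ℕ) (hmM : m ≤ M) :
    gfun M - gfun m ≤ 1 / (m + 1) - 1 / (M + 1) := by
  induction M with
  | zero => interval_cases m; simp
  | succ M ih =>
    rcases Nat.lt_or_ge m (M+1) with hlt | hge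
    · have hm : m ≤ M := by omega
      have h1 := ih hm
      have h2 := gfun_succ_sub M
      have hlog : 1 / ((M:ℝ) + 2) ≤ Real.log (((M:ℝ) + 2) / ((M:ℝ) + 1)) := by
        have := Real.one_sub_inv_le_log_of_pos (x := ((M:ℝ) + 2) / ((M:ℝ) + 1)) (by positivity)
        have : 1 - (((M:ℝ) + 2) / ((M:ℝ) + 1))⁻¹ ≤ Real.log (((M:ℝ) + 2) / ((M:ℝ) + 1)) := this
        have heq : 1 - (((M:ℝ) + 2) / ((M:ℝ) + 1))⁻¹ = 1 / ((M:ℝ) + 2) := by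
          rw [inv_div]
          field_simp
          norm_num
        linarith
      have hc2 : 1 / (((M:ℝ)) + 1 + 1) = 1 / ((M:ℝ) + 2) := by rw [show ((M:ℝ)+1+1) = (M:ℝ)+2 from by ring]
      push_cast
      linarith
    · have : m = M + 1 := by omega
      subst this; simp

lemma gfun_bdd : BddAbove (Set.range gfun) := by
  refine ⟨gfun 0 + 1, ?_⟩
  rintro _ ⟨M, rfl⟩
  have := gfun_tail 0 M (Nat.zero_le M)
  rw [one_div] at this
  have h2 : (0:ℝ) ≤ ((M:ℝ) + 1)⁻¹ := by positivity
  push_cast at this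
  norm_num at this
  linarith

lemma harmonic_approx : ∃ L : ℝ, ∀ m : ℕ, |gfun m - L| ≤ 1 / (m + 1) := by
  refine ⟨⨆ m, gfun m, fun m => ?_⟩
  have h1 : gfun m ≤ ⨆ m, gfun m := le_ciSup gfun_bdd m
  have h2 : (⨆ m, gfun m) ≤ gfun m + 1 / (m + 1) := by
    apply ciSup_le
    intro M
    rcases le_or_gt m M with hm | hm
    · have := gfun_tail m M hm
      have : (0:ℝ) ≤ 1 / ((M:ℝ)+1) := by positivity
      linarith [gfun_tail m M hm]
    · have := gfun_mono (le_of_lt hm)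
      have h0 : (0:ℝ) ≤ 1 / ((m:ℝ)+1) := by positivity
      linarith
  rw [abs_le]
  constructor <;> linarith

open Classical in
noncomputable def Ncnt {Ω : Type*} (X : ℕ → Ω → ℤ) (x : ℤ) (ω : Ω) (n : ℕ) : ℕ :=
  ((Finset.range (n + 1)).filter (fun i => X i ω = x)).card

lemma Znum_eq {Ω : Type*} (X : ℕ → Ω → ℤ) (n : ℕ) (x : ℤ) (ω : Ω) :
    Znum X n x ω = (Ncnt X x ω n : ℝ) + 1 := by
  classical
  rw [Znum, Ncnt, Finset.sum_boole, add_comm]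

lemma Ncnt_succ {Ω : Type*} (X : ℕ → Ω → ℤ) (x : ℤ) (ω : Ω) (n : ℕ) :
    Ncnt X x ω (n + 1) = Ncnt X x ω n + (if X (n + 1) ω = x then 1 else 0) := by
  classical
  rw [Ncnt, Ncnt, Finset.range_add_one, Finset.filter_insert]
  by_cases hx : X (n + 1) ω = x
  · rw [if_pos hx, Finset.card_insert_of_notMem (by simp), if_pos hx]
  · rw [if_neg hx, if_neg hx]
    omega

lemma cross_sum_eq {Ω : Type*} (X : ℕ → Ω → ℤ) (x : ℤ) (ω : Ω)
    (hnn : ∀ m : ℕ, X (m + 1) ω = X m ω + 1 ∨ X (m + 1) ω = X m ω - 1) (n : ℕ) :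
    Yplus X n (x - 1) ω + Yminus X n (x + 1) ω
      = Hsum (Ncnt X x ω n) - Hsum (Ncnt X x ω 0) := by
  have key : Yplus X n (x - 1) ω + Yminus X n (x + 1) ω
      = ∑ k ∈ Finset.Icc 1 n, (if X k ω = x then (1:ℝ) else 0) / Znum X (k - 1) x ω := by
    rw [Yplus, Yminus, ← Finset.sum_add_distrib]
    refine Finset.sum_congr rfl fun k hk => ?_
    have hk1 : 1 ≤ k := (Finset.mem_Icc.mp hk).1
    have hxe : x - 1 + 1 = x := by ring
    have hxe' : x + 1 - 1 = x := by ring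
    rw [hxe, hxe']
    have hkk : k - 1 + 1 = k := Nat.succ_pred_eq_of_pos hk1
    have hstep := hnn (k - 1)
    rw [hkk] at hstep
    have hne : x - 1 ≠ x + 1 := by omega
    by_cases hx : X k ω = x
    · rcases hstep with hs | hs
      · have h1 : X (k-1) ω = x - 1 := by omega
        rw [if_pos (⟨h1, hx⟩ : _ ∧ _), if_neg (fun hcon => hne (h1.symm.trans hcon.1)),
          if_pos hx, zero_div, add_zero]
      · have h1 : X (k-1) ω = x + 1 := by omega
        rw [if_neg (fun hcon => hne (hcon.1.symm.trans h1)), if_pos (⟨h1, hx⟩ : _ ∧ _),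
          if_pos hx, zero_div, zero_add]
    · rw [if_neg (fun hcon => hx hcon.2), if_neg (fun hcon => hx hcon.2), if_neg hx]
      simp
  rw [key]; clear key
  induction n with
  | zero => simp
  | succ n ih =>
    rw [show Finset.Icc 1 (n+1) = insert (n+1) (Finset.Icc 1 n) from
      (Finset.insert_Icc_right_eq_Icc_add_one (by omega)).symm, Finset.sum_insert (by simp), ih,
      Ncnt_succ]
    have hH : Hsum (Ncnt X x ω n + 1)
        = Hsum (Ncnt X x ω n) + 1 / ((Ncnt X x ω n : ℝ) + 1) := by
      simp [Hsum, Finset.sum_range_succ]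
    by_cases hx : X (n + 1) ω = x
    · rw [if_pos hx, if_pos hx, hH, Nat.add_sub_cancel, Znum_eq]
      ring
    · rw [if_neg hx, if_neg hx]
      simp

/-- Proposition 3.1(b) of Tarrès: almost surely,
`ln Z_n(x) - (Y⁺_n(x-1) + Y⁻_n(x+1))` equals a constant plus `O(Z_n(x)⁻¹)`. -/
theorem log_Z_eq_crossing_sums
    {Ω : Type*} {m0 : MeasurableSpace Ω} (μ : Measure Ω) [IsProbabilityMeasure μ]
    (ℱ : Filtration ℕ m0) (X : ℕ → Ω → ℤ) (v0 : ℤ) (h : IsVRRW μ ℱ X v0) (x : ℤ) :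
    ∀ᵐ ω ∂μ, ∃ c : ℝ,
      (fun n : ℕ => Real.log (Znum X n x ω) -
          (Yplus X n (x - 1) ω + Yminus X n (x + 1) ω) - c)
        =O[atTop] fun n : ℕ => (Znum X n x ω)⁻¹ := by
  obtain ⟨L, hL⟩ := harmonic_approx
  filter_upwards [ae_all_iff.2 h.nearest] with ω hω
  refine ⟨Hsum (Ncnt X x ω 0) - L, ?_⟩
  refine Asymptotics.isBigO_of_le atTop fun n => ?_
  rw [Real.norm_eq_abs, Real.norm_eq_abs, cross_sum_eq X x ω hω n, Znum_eq]
  have hpos : (0:ℝ) < (Ncnt X x ω n : ℝ) + 1 := by positivity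
  have heq : Real.log ((Ncnt X x ω n : ℝ) + 1)
        - (Hsum (Ncnt X x ω n) - Hsum (Ncnt X x ω 0)) - (Hsum (Ncnt X x ω 0) - L)
      = -(gfun (Ncnt X x ω n) - L) := by
    simp only [gfun]
    ring
  rw [heq, abs_neg, abs_of_nonneg (le_of_lt (inv_pos.mpr hpos)), ← one_div]
  exact hL (Ncnt X x ω n)
end

section
/- For the VRRW on ℤ and any x ∈ ℤ, almost surely on Υ(x) the limit β⁻_∞(x+2) := lim_n Z_n(x+1)/Z_n(x+2) exists in [0, ∞), and on Υ(x) ∩ {Z_∞(x+2) = ∞} one has β⁻_∞(x+2) = α⁻_∞(x+2). -/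
open MeasureTheory Filter

namespace VRRWaux

open Finset Topology
open scoped NNReal ENNReal

variable {Ω : Type*} {X : ℕ → Ω → ℤ} {ω : Ω}

/-- natural visit count in `[0,n]`. -/
def vct (X : ℕ → Ω → ℤ) (n : ℕ) (v : ℤ) (ω : Ω) : ℕ :=
  ∑ i ∈ Finset.range (n + 1), if X i ω = v then 1 else 0

lemma cast_vct (n : ℕ) (v : ℤ) :
    ((vct X n v ω : ℕ) : ℝ) = ∑ i ∈ Finset.range (n + 1), if X i ω = v then (1 : ℝ) else 0 := by
  unfold vct
  push_cast [apply_ite ((↑) : ℕ → ℝ)]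
  rfl

lemma Znum_eq (n : ℕ) (v : ℤ) : Znum X n v ω = (vct X n v ω : ℝ) + 1 := by
  rw [Znum, cast_vct]; ring

lemma vct_succ (n : ℕ) (v : ℤ) :
    vct X (n + 1) v ω = vct X n v ω + if X (n + 1) ω = v then 1 else 0 := by
  unfold vct
  rw [Finset.sum_range_succ]

lemma vct_mono (v : ℤ) : Monotone fun n => vct X n v ω := by
  intro m n hmn
  unfold vct
  exact Finset.sum_le_sum_of_subset (Finset.range_subset_range.2 (by omega))

lemma Znum_ge_one (n : ℕ) (v : ℤ) : 1 ≤ Znum X n v ω := by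
  rw [Znum_eq]
  have : (0:ℝ) ≤ (vct X n v ω : ℝ) := by positivity
  linarith

lemma Znum_pos (n : ℕ) (v : ℤ) : 0 < Znum X n v ω :=
  lt_of_lt_of_le one_pos (Znum_ge_one n v)

lemma Znum_mono {m n : ℕ} (h : m ≤ n) (v : ℤ) : Znum X m v ω ≤ Znum X n v ω := by
  rw [Znum_eq, Znum_eq]
  have := vct_mono (X := X) (ω := ω) v h
  have : (vct X m v ω : ℝ) ≤ (vct X n v ω : ℝ) := by exact_mod_cast this
  linarith

-- generic sum helpers

lemma range_succ_split (f : ℕ → ℝ) (n : ℕ) :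
    ∑ i ∈ range (n + 1), f i = f 0 + ∑ i ∈ Icc 1 n, f i := by
  induction n with
  | zero => simp
  | succ n ih =>
      rw [Finset.sum_range_succ, ih, Finset.sum_Icc_succ_top (by omega : 1 ≤ n + 1)]
      ring

lemma shift_sum (f : ℕ → ℝ) (j m : ℕ) :
    ∑ i ∈ Icc (j + 1) (m + 1), f i = ∑ i ∈ Icc j m, f (i + 1) := by
  rw [← Finset.map_add_right_Icc j m 1]
  rw [Finset.sum_map]
  rfl

lemma shift_sum' (f : ℕ → ℝ) (n : ℕ) :
    ∑ k ∈ Icc 1 n, f (k - 1) = ∑ j ∈ range n, f j := by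
  induction n with
  | zero => simp
  | succ n ih =>
      rw [Finset.sum_Icc_succ_top (by omega : 1 ≤ n + 1), ih, Finset.sum_range_succ]
      simp

lemma mono_sum_Icc (g : ℕ → ℝ) (hg : ∀ k, 1 ≤ k → 0 ≤ g k) :
    Monotone fun n => ∑ k ∈ Icc 1 n, g k := by
  intro m n hmn
  refine Finset.sum_le_sum_of_subset_of_nonneg (Finset.Icc_subset_Icc_right hmn)
    fun k hk _ => hg k (Finset.mem_Icc.1 hk).1

/-- key quadratic series bound -/
lemma sq_series_bound (δ D : ℕ → ℝ) (hδ : ∀ k, δ k = 0 ∨ δ k = 1)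
    (hD : ∀ k, 1 ≤ k → δ k = 1 → 1 + ∑ j ∈ Icc 1 (k - 1), δ j ≤ D k) :
    ∀ n, ∑ k ∈ Icc 1 n, δ k / (D k) ^ 2 ≤ 2 - 2 / (1 + ∑ k ∈ Icc 1 n, δ k) := by
  have hδ0 : ∀ k, 0 ≤ δ k := fun k => by rcases hδ k with h | h <;> simp [h]
  intro n
  induction n with
  | zero => simp
  | succ n ih =>
      have hs0 : (0:ℝ) ≤ ∑ k ∈ Icc 1 n, δ k := Finset.sum_nonneg fun k _ => hδ0 k
      rw [Finset.sum_Icc_succ_top (by omega : 1 ≤ n + 1),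
          Finset.sum_Icc_succ_top (by omega : 1 ≤ n + 1)]
      rcases hδ (n + 1) with h | h
      · rw [h]
        simp only [add_zero, zero_div]
        linarith
      · rw [h]
        set s := ∑ k ∈ Icc 1 n, δ k with hs
        have hDn : 1 + s ≤ D (n + 1) := by
          have := hD (n + 1) (by omega) h
          simpa using this
        have h1s : (0:ℝ) < 1 + s := by linarith
        have hDpos : (0:ℝ) < D (n + 1) := lt_of_lt_of_le h1s hDn
        have hterm : 1 / (D (n + 1)) ^ 2 ≤ 1 / (1 + s) ^ 2 := by
          apply one_div_le_one_div_of_le (by positivity)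
          exact pow_le_pow_left₀ h1s.le hDn 2
        have key : 2 - 2 / (1 + s) + 1 / (1 + s) ^ 2 ≤ 2 - 2 / (1 + (s + 1)) := by
          have h2s : (0:ℝ) < 2 + s := by linarith
          have e1 : 1 + (s + 1) = 2 + s := by ring
          rw [e1, ← sub_nonneg]
          have e2 : 2 - 2 / (2 + s) - (2 - 2 / (1 + s) + 1 / (1 + s) ^ 2)
              = (2 / (1 + s) - 1 / (1 + s) ^ 2) - 2 / (2 + s) := by ring
          rw [e2]
          have e3 : 2 / (1 + s) - 1 / (1 + s) ^ 2 = (2 * (1 + s) - 1) / (1 + s) ^ 2 := by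
            field_simp
          rw [e3, sub_nonneg, div_le_div_iff₀ h2s (by positivity)]
          nlinarith [hs0]
        calc ∑ k ∈ Icc 1 n, δ k / D k ^ 2 + 1 / D (n + 1) ^ 2
            ≤ (2 - 2 / (1 + s)) + 1 / (1 + s) ^ 2 := by linarith
          _ ≤ 2 - 2 / (1 + (s + 1)) := key
        

section Pathwise

lemma pred_nbr (hnn : ∀ n, X (n + 1) ω = X n ω + 1 ∨ X (n + 1) ω = X n ω - 1) (i : ℕ) (v : ℤ) (h : X (i + 1) ω = v) :
    X i ω = v - 1 ∨ X i ω = v + 1 := by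
  rcases hnn i with h' | h'
  · left; omega
  · right; omega

/-- indicator of a visit, as a real number -/
noncomputable def ind (X : ℕ → Ω → ℤ) (i : ℕ) (v : ℤ) (ω : Ω) : ℝ :=
  if X i ω = v then (1 : ℝ) else 0

lemma ind_nonneg (i : ℕ) (v : ℤ) : 0 ≤ ind X i v ω := by
  unfold ind; split <;> norm_num

lemma ind_le_one (i : ℕ) (v : ℤ) : ind X i v ω ≤ 1 := by
  unfold ind; split <;> norm_num

lemma cross_count (hnn : ∀ n, X (n + 1) ω = X n ω + 1 ∨ X (n + 1) ω = X n ω - 1) (j n : ℕ) (v : ℤ) :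
    ∑ i ∈ Icc (j + 1) n, ind X i v ω
      ≤ ∑ i ∈ Icc j (n - 1), (ind X i (v - 1) ω + ind X i (v + 1) ω) := by
  cases n with
  | zero =>
      rw [Finset.Icc_eq_empty (by omega)]
      simp only [Finset.sum_empty]
      exact Finset.sum_nonneg fun i _ => by
        have := ind_nonneg (X := X) (ω := ω) i (v - 1)
        have := ind_nonneg (X := X) (ω := ω) i (v + 1)
        linarith
  | succ m =>
      rw [show m + 1 - 1 = m from rfl, shift_sum]
      refine Finset.sum_le_sum fun i _ => ?_
      by_cases h : X (i + 1) ω = v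
      · rcases pred_nbr hnn i v h with h' | h'
        · have h2 := ind_nonneg (X := X) (ω := ω) i (v + 1)
          simp only [ind] at h2 ⊢
          rw [if_pos h, if_pos h']
          linarith
        · have h2 := ind_nonneg (X := X) (ω := ω) i (v - 1)
          simp only [ind] at h2 ⊢
          rw [if_pos h, if_pos h']
          linarith
      · have h2 := ind_nonneg (X := X) (ω := ω) i (v - 1)
        have h3 := ind_nonneg (X := X) (ω := ω) i (v + 1)
        simp only [ind] at h2 h3 ⊢
        rw [if_neg h]
        linarith

lemma range_eq_Icc0 (n : ℕ) : Finset.range (n + 1) = Icc 0 n := by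
  rw [← Nat.Ico_zero_eq_range, Finset.Ico_add_one_right_eq_Icc]

lemma Znum_sum_ind (n : ℕ) (v : ℤ) :
    Znum X n v ω = 1 + ∑ i ∈ Finset.range (n + 1), ind X i v ω := rfl

lemma neighbor (hnn : ∀ n, X (n + 1) ω = X n ω + 1 ∨ X (n + 1) ω = X n ω - 1) (n : ℕ) (v : ℤ) :
    Znum X n v ω ≤ Znum X n (v - 1) ω + Znum X n (v + 1) ω := by
  rw [Znum_sum_ind, Znum_sum_ind, Znum_sum_ind]
  rw [range_succ_split (fun i => ind X i v ω)]
  have h1 : ∑ i ∈ Icc 1 n, ind X i v ω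
      ≤ ∑ i ∈ Icc 0 (n - 1), (ind X i (v - 1) ω + ind X i (v + 1) ω) := by
    have := cross_count (X := X) (ω := ω) hnn 0 n v
    simpa using this
  have h2 : ∑ i ∈ Icc 0 (n - 1), (ind X i (v - 1) ω + ind X i (v + 1) ω)
      ≤ ∑ i ∈ Finset.range (n + 1), (ind X i (v - 1) ω + ind X i (v + 1) ω) := by
    rw [range_eq_Icc0]
    refine Finset.sum_le_sum_of_subset_of_nonneg (Finset.Icc_subset_Icc_right (by omega))
      fun i _ _ => ?_
    have := ind_nonneg (X := X) (ω := ω) i (v - 1)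
    have := ind_nonneg (X := X) (ω := ω) i (v + 1)
    linarith
  have h3 : ind X 0 v ω ≤ 1 := ind_le_one 0 v
  simp only [Finset.sum_add_distrib] at h1 h2 ⊢
  linarith

lemma sum_range_split (f : ℕ → ℝ) {j n : ℕ} (h : j ≤ n) :
    ∑ i ∈ Finset.range (n + 1), f i
      = ∑ i ∈ Finset.range (j + 1), f i + ∑ i ∈ Icc (j + 1) n, f i := by
  simp only [← Nat.Ico_zero_eq_range, ← Finset.Ico_add_one_right_eq_Icc]
  exact (Finset.sum_Ico_consecutive f (by omega) (by omega)).symm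

lemma Znum_diff (v : ℤ) {j n : ℕ} (h : j ≤ n) :
    Znum X n v ω - Znum X j v ω = ∑ i ∈ Icc (j + 1) n, ind X i v ω := by
  rw [Znum_sum_ind, Znum_sum_ind, sum_range_split (fun i => ind X i v ω) h]
  ring

lemma e_mono_visits (hnn : ∀ n, X (n + 1) ω = X n ω + 1 ∨ X (n + 1) ω = X n ω - 1) {v : ℤ} {j j' : ℕ} (hj : j ≤ j') (h1 : X j ω = v) (h2 : X j' ω = v) :
    (Znum X j (v - 1) ω + Znum X j (v + 1) ω) - Znum X j v ω
      ≤ (Znum X j' (v - 1) ω + Znum X j' (v + 1) ω) - Znum X j' v ω := by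
  rcases eq_or_lt_of_le hj with rfl | hjj
  · exact le_rfl
  · have key : ∑ i ∈ Icc (j + 1) j', ind X i v ω
        ≤ ∑ i ∈ Icc (j + 1) j', (ind X i (v - 1) ω + ind X i (v + 1) ω) := by
      have hcc := cross_count (X := X) (ω := ω) hnn j j' v
      have heq : ∑ i ∈ Icc (j + 1) j', (ind X i (v - 1) ω + ind X i (v + 1) ω)
          = ∑ i ∈ Icc j j', (ind X i (v - 1) ω + ind X i (v + 1) ω) := by
        refine Finset.sum_subset (Finset.Icc_subset_Icc_left (by omega)) fun i hi hni => ?_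
        have : i = j := by
          simp only [Finset.mem_Icc] at hi hni
          omega
        subst this
        simp [ind, h1, show v ≠ v - 1 by omega, show v ≠ v + 1 by omega]
      have hle : ∑ i ∈ Icc j (j' - 1), (ind X i (v - 1) ω + ind X i (v + 1) ω)
          ≤ ∑ i ∈ Icc j j', (ind X i (v - 1) ω + ind X i (v + 1) ω) := by
        refine Finset.sum_le_sum_of_subset_of_nonneg (Finset.Icc_subset_Icc_right (by omega))
          fun i _ _ => ?_
        have := ind_nonneg (X := X) (ω := ω) i (v - 1)
        have := ind_nonneg (X := X) (ω := ω) i (v + 1)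
        linarith
      rw [heq]
      exact hcc.trans hle
    have d1 := Znum_diff (X := X) (ω := ω) (v - 1) hj
    have d2 := Znum_diff (X := X) (ω := ω) (v + 1) hj
    have d3 := Znum_diff (X := X) (ω := ω) v hj
    rw [Finset.sum_add_distrib] at key
    linarith

end Pathwise

section Conv

lemma telescope (v : ℤ) : ∀ n,
    ∑ k ∈ Icc 1 n, ind X k v ω / Znum X k v ω
      = ((harmonic (vct X n v ω + 1) : ℝ)) - ((harmonic (vct X 0 v ω + 1) : ℝ)) := by
  intro n
  induction n with
  | zero => simp
  | succ n ih =>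
      rw [Finset.sum_Icc_succ_top (by omega : 1 ≤ n + 1), ih]
      by_cases h : X (n + 1) ω = v
      · have hz : Znum X (n + 1) v ω = ((vct X n v ω : ℝ) + 2) := by
          rw [Znum_eq, vct_succ, if_pos h]; push_cast; ring
        have hs : ((harmonic (vct X n v ω + 1 + 1) : ℚ) : ℝ)
            = ((harmonic (vct X n v ω + 1) : ℚ) : ℝ) + 1 / ((vct X n v ω : ℝ) + 2) := by
          rw [harmonic_succ]
          push_cast
          ring
        unfold ind
        rw [if_pos h, vct_succ, if_pos h, hz, hs]
        ring
      · unfold ind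
        rw [if_neg h, vct_succ, if_neg h]
        simp

lemma exists_tendsto_of_mono_bdd (f : ℕ → ℝ) (hm : Monotone f)
    (hb : BddAbove (Set.range f)) : ∃ l, Tendsto f atTop (𝓝 l) :=
  ⟨_, tendsto_atTop_ciSup hm hb⟩

lemma exists_tendsto_of_anti_bdd (f : ℕ → ℝ) (hm : Antitone f)
    (hb : BddBelow (Set.range f)) : ∃ l, Tendsto f atTop (𝓝 l) :=
  ⟨_, tendsto_atTop_ciInf hm hb⟩

lemma tendsto_atBot_of_anti_unbdd (f : ℕ → ℝ) (hm : Antitone f)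
    (hb : ¬ BddBelow (Set.range f)) : Tendsto f atTop atBot := by
  rw [tendsto_atBot]
  intro b
  obtain ⟨n, hn⟩ : ∃ n, f n < b := by
    by_contra hc
    push_neg at hc
    exact hb ⟨b, by rintro y ⟨n, rfl⟩; exact hc n⟩
  exact eventually_atTop.2 ⟨n, fun m hm' => le_trans (hm hm') hn.le⟩

lemma nat_ev_const (f : ℕ → ℕ) (hm : Monotone f)
    (hb : BddAbove (Set.range fun n => (f n : ℝ))) : ∃ N, ∀ n, N ≤ n → f n = f N := by
  obtain ⟨K, hK⟩ := hb
  have hbdd : BddAbove (Set.range f) := by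
    refine ⟨⌊K⌋₊, ?_⟩
    rintro y ⟨n, rfl⟩
    exact Nat.le_floor (hK (Set.mem_range_self n))
  have hne : (Set.range f).Nonempty := ⟨f 0, ⟨0, rfl⟩⟩
  obtain ⟨N, hN⟩ := Nat.sSup_mem hne hbdd
  exact ⟨N, fun n hn => le_antisymm (hN ▸ le_csSup hbdd (Set.mem_range_self n)) (hm hn)⟩

lemma nat_tendsto_atTop (f : ℕ → ℕ) (hm : Monotone f)
    (hb : ¬ BddAbove (Set.range fun n => (f n : ℝ))) : Tendsto f atTop atTop := by
  rw [tendsto_atTop]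
  intro b
  obtain ⟨n, hn⟩ : ∃ n, (b : ℝ) ≤ (f n : ℝ) := by
    by_contra hc
    push_neg at hc
    exact hb ⟨b, by rintro y ⟨m, rfl⟩; exact (hc m).le⟩
  have hb' : b ≤ f n := by exact_mod_cast hn
  exact eventually_atTop.2 ⟨n, fun m hmn => hb'.trans (hm hmn)⟩

lemma harm_tendsto_atTop : Tendsto (fun m : ℕ => (harmonic m : ℝ)) atTop atTop := by
  have h1 := Real.tendsto_harmonic_sub_log
  have h2 : Tendsto (fun m : ℕ => Real.log m) atTop atTop :=
    Real.tendsto_log_atTop.comp tendsto_natCast_atTop_atTop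
  have h3 := h1.add_atTop h2
  have : (fun m : ℕ => (harmonic m : ℝ) - Real.log m + Real.log m)
      = fun m : ℕ => (harmonic m : ℝ) := by
    funext m; ring
  rwa [this] at h3

end Conv

section KeyAnalysis

lemma mediant {u w s t : ℝ} (hu : 0 ≤ u) (huw : u ≤ w) (hw : 0 < w) (hs : 0 ≤ s)
    (hst : s ≤ t) : (u + s) / (w + s) ≤ (u + t) / (w + t) := by
  rw [div_le_div_iff₀ (by linarith) (by linarith)]
  nlinarith

lemma keyAnalysis (E : ℕ → ℝ) (hE0 : ∀ m, 0 ≤ E m) (hmono : Monotone E) (Gb : ℝ)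
    (hsum : ∀ M, ∑ m ∈ Finset.range M, E m / ((m + 2) * (m + 2 + E m)) ≤ Gb) :
    Tendsto (fun m => E m / ((m : ℝ) + 2)) atTop (𝓝 0) := by
  set g : ℕ → ℝ := fun m => E m / ((m + 2) * (m + 2 + E m)) with hg
  have hg0 : ∀ m, 0 ≤ g m := fun m => by
    have := hE0 m
    have h1 : (0:ℝ) < (m:ℝ) + 2 := by positivity
    positivity
  set S : ℕ → ℝ := fun M => ∑ m ∈ Finset.range M, g m with hS
  have hSmono : Monotone S := fun a b hab =>
    Finset.sum_le_sum_of_subset_of_nonneg (Finset.range_subset_range.2 hab) fun m _ _ => hg0 m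
  have hSbdd : BddAbove (Set.range S) := by
    refine ⟨Gb, ?_⟩
    rintro y ⟨M, rfl⟩
    exact hsum M
  set T := ⨆ M, S M with hT
  have hST : Tendsto S atTop (𝓝 T) := tendsto_atTop_ciSup hSmono hSbdd
  have hSleT : ∀ M, S M ≤ T := fun M => le_ciSup hSbdd M
  rw [Metric.tendsto_atTop]
  intro ε hε
  set c₀ : ℝ := ε / (2 * (2 + ε)) with hc₀
  have hc₀pos : 0 < c₀ := by positivity
  obtain ⟨M₀, hM₀⟩ : ∃ M₀, T - c₀ < S M₀ := by
    have : ∀ᶠ M in atTop, T - c₀ < S M := by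
      apply hST.eventually_const_lt
      linarith
    exact this.exists
  refine ⟨M₀, fun M hM => ?_⟩
  have key : E M < ε * ((M : ℝ) + 2) := by
    by_contra hcon
    push_neg at hcon
    -- blocks
    have hblock : ∀ m ∈ Finset.Ico M (2 * M + 3), ε / ((2 + ε) * ((m : ℝ) + 2)) ≤ g m := by
      intro m hm
      simp only [Finset.mem_Ico] at hm
      have hmM : M ≤ m := hm.1
      have hm2 : (m : ℝ) + 2 ≤ 2 * ((M : ℝ) + 2) := by
        have : (m : ℝ) ≤ 2 * (M : ℝ) + 2 := by exact_mod_cast Nat.lt_succ_iff.1 hm.2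
        linarith
      have hEm : ε * ((m : ℝ) + 2) / 2 ≤ E m := by
        have h1 : E M ≤ E m := hmono hmM
        nlinarith
      have hc : (0:ℝ) < (m : ℝ) + 2 := by positivity
      have hEmpos : 0 ≤ E m := hE0 m
      rw [hg]
      simp only
      rw [div_le_div_iff₀ (by positivity) (by positivity)]
      nlinarith
    have hsum2 : c₀ ≤ S (2 * M + 3) - S M := by
      have hsplit : S (2 * M + 3) - S M = ∑ m ∈ Finset.Ico M (2 * M + 3), g m := by
        have hcons : ∑ m ∈ Finset.range M, g m + ∑ m ∈ Finset.Ico M (2 * M + 3), g m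
            = ∑ m ∈ Finset.range (2 * M + 3), g m := by
          simp only [← Nat.Ico_zero_eq_range]
          exact Finset.sum_Ico_consecutive g (by omega) (by omega)
        rw [hS]
        simp only
        linarith
      rw [hsplit]
      have hlow : ∀ m ∈ Finset.Ico M (2 * M + 3),
          ε / ((2 + ε) * (2 * (M : ℝ) + 4)) ≤ g m := by
        intro m hm
        refine le_trans ?_ (hblock m hm)
        simp only [Finset.mem_Ico] at hm
        have h1 : (m : ℝ) + 2 ≤ 2 * (M : ℝ) + 4 := by
          have : (m : ℝ) ≤ 2 * (M : ℝ) + 2 := by exact_mod_cast Nat.lt_succ_iff.1 hm.2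
          linarith
        apply div_le_div_of_nonneg_left hε.le (by positivity)
        apply mul_le_mul_of_nonneg_left h1 (by linarith)
      calc c₀ ≤ ((M : ℝ) + 3) * (ε / ((2 + ε) * (2 * (M : ℝ) + 4))) := by
              have hM0 : (0:ℝ) ≤ (M : ℝ) := Nat.cast_nonneg M
              rw [hc₀, ← mul_div_assoc, div_le_div_iff₀ (by positivity) (by positivity)]
              nlinarith [mul_nonneg (mul_nonneg (by linarith : (0:ℝ) ≤ 2 + ε)
                (by norm_num : (0:ℝ) ≤ 2)) hε.le]
        _ ≤ ∑ m ∈ Finset.Ico M (2 * M + 3), g m := by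
              have hcard : (Finset.Ico M (2 * M + 3)).card = M + 3 := by
                rw [Nat.card_Ico]; omega
              have := Finset.card_nsmul_le_sum (Finset.Ico M (2 * M + 3))
                g (ε / ((2 + ε) * (2 * (M : ℝ) + 4))) hlow
              rw [hcard, nsmul_eq_mul] at this
              push_cast at this
              exact this
    have : S (2 * M + 3) - S M < c₀ := by
      have h1 : S M₀ ≤ S M := hSmono hM
      have h2 : S (2 * M + 3) ≤ T := hSleT _
      linarith
    linarith
  have hpos : (0:ℝ) < (M : ℝ) + 2 := by positivity
  rw [Real.dist_eq, sub_zero, abs_of_nonneg (div_nonneg (hE0 M) hpos.le)]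
  rw [div_lt_iff₀ hpos]
  linarith [key]

end KeyAnalysis

section Rto1

lemma vct_count (v : ℤ) (n : ℕ) :
    vct X n v ω = Nat.count (fun i => X i ω = v) (n + 1) := by
  rw [Nat.count_eq_card_filter_range]
  unfold vct
  rw [Finset.sum_boole]
  simp

lemma rto1 (hnn : ∀ n, X (n + 1) ω = X n ω + 1 ∨ X (n + 1) ω = X n ω - 1) (x : ℤ)
    (hinf : {j | X j ω = x + 2}.Infinite) (Gb : ℝ)
    (hG : ∀ n, ∑ k ∈ Icc 1 n,
        (ind X (k - 1) (x + 2) ω / Znum X (k - 1) (x + 2) ω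
          - ind X (k - 1) (x + 2) ω
            / (Znum X (k - 1) (x + 1) ω + Znum X (k - 1) (x + 3) ω)) ≤ Gb) :
    Tendsto (fun n => Znum X n (x + 2) ω / (Znum X n (x + 1) ω + Znum X n (x + 3) ω))
      atTop (𝓝 1) := by
  set p : ℕ → Prop := fun j => X j ω = x + 2 with hp
  have hinf' : (setOf p).Infinite := hinf
  set t : ℕ → ℕ := fun m => Nat.nth p m with ht
  have htmem : ∀ m, X (t m) ω = x + 2 := fun m => Nat.nth_mem_of_infinite hinf' m
  have htmono : StrictMono t := Nat.nth_strictMono hinf'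
  have hcount : ∀ m, Nat.count p (t m) = m := Nat.count_nth_of_infinite hinf'
  have hZbt : ∀ m, Znum X (t m) (x + 2) ω = (m : ℝ) + 2 := by
    intro m
    rw [Znum_eq, vct_count]
    have hc : Nat.count p (t m + 1) = m + 1 := by
      rw [Nat.count_succ, hcount m, if_pos (htmem m)]
    have hc' : ((Nat.count (fun i => X i ω = x + 2) (t m + 1) : ℕ) : ℝ) = (m : ℝ) + 1 := by
      have h2 : Nat.count (fun i => X i ω = x + 2) (t m + 1) = m + 1 := hc
      exact_mod_cast h2
    rw [hc']
    ring
  set d : ℕ → ℝ := fun n => Znum X n (x + 1) ω + Znum X n (x + 3) ω with hd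
  have hnbr : ∀ n, Znum X n (x + 2) ω ≤ d n := by
    intro n
    have h := neighbor (X := X) (ω := ω) hnn n (x + 2)
    rw [show x + 2 - 1 = x + 1 by ring, show x + 2 + 1 = x + 3 by ring] at h
    exact h
  have hdpos : ∀ n, 0 < d n := fun n =>
    add_pos (Znum_pos n (x + 1)) (Znum_pos n (x + 3))
  have hdmono : ∀ {a b : ℕ}, a ≤ b → d a ≤ d b := fun hab =>
    add_le_add (Znum_mono hab (x + 1)) (Znum_mono hab (x + 3))
  set e : ℕ → ℝ := fun n => d n - Znum X n (x + 2) ω with he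
  have he0 : ∀ n, 0 ≤ e n := fun n => sub_nonneg.2 (hnbr n)
  set E : ℕ → ℝ := fun m => e (t m) with hE
  have hEmono : Monotone E := by
    intro m m' hmm
    have h := e_mono_visits (X := X) (ω := ω) hnn (v := x + 2)
      (htmono.monotone hmm) (htmem m) (htmem m')
    rw [show x + 2 - 1 = x + 1 by ring, show x + 2 + 1 = x + 3 by ring] at h
    exact h
  have hdt : ∀ m, d (t m) = (m : ℝ) + 2 + E m := by
    intro m
    have : E m = d (t m) - Znum X (t m) (x + 2) ω := rfl
    rw [this, hZbt m]
    ring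
  have hseries : ∀ M, ∑ m ∈ Finset.range M, E m / ((m + 2) * (m + 2 + E m)) ≤ Gb := by
    intro M
    rcases Nat.eq_zero_or_pos M with rfl | hMpos
    · simpa using hG 0
    · set w : ℕ → ℝ := fun k => ind X (k - 1) (x + 2) ω / Znum X (k - 1) (x + 2) ω
          - ind X (k - 1) (x + 2) ω / (Znum X (k - 1) (x + 1) ω + Znum X (k - 1) (x + 3) ω)
        with hw
      have hw0 : ∀ k, 0 ≤ w k := by
        intro k
        have h1 : ind X (k - 1) (x + 2) ω / (Znum X (k - 1) (x + 1) ω + Znum X (k - 1) (x + 3) ω)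
            ≤ ind X (k - 1) (x + 2) ω / Znum X (k - 1) (x + 2) ω :=
          div_le_div_of_nonneg_left (ind_nonneg _ _) (Znum_pos _ _) (hnbr (k - 1))
        simpa [hw] using sub_nonneg.2 h1
      have himg : ∑ m ∈ Finset.range M, E m / ((m + 2) * (m + 2 + E m))
          = ∑ k ∈ (Finset.range M).image (fun m => t m + 1), w k := by
        rw [Finset.sum_image (fun a _ b _ hab => htmono.injective (by omega))]
        refine Finset.sum_congr rfl fun m _ => ?_
        have hidx : t m + 1 - 1 = t m := by omega
        rw [hw]
        simp only [hidx]
        have hiv : ind X (t m) (x + 2) ω = 1 := by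
          unfold ind; rw [if_pos (htmem m)]
        rw [hiv, hZbt m, show Znum X (t m) (x + 1) ω + Znum X (t m) (x + 3) ω = d (t m) from rfl,
          hdt m]
        have h1 : (0:ℝ) < (m : ℝ) + 2 := by positivity
        have h2 : (0:ℝ) < (m : ℝ) + 2 + E m := by
          have := he0 (t m); have : 0 ≤ E m := this; linarith
        field_simp
        ring
      rw [himg]
      refine le_trans (Finset.sum_le_sum_of_subset_of_nonneg ?_ fun k _ _ => hw0 k)
        (hG (t (M - 1) + 1))
      intro k hk
      simp only [Finset.mem_image, Finset.mem_range] at hk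
      obtain ⟨m, hm, rfl⟩ := hk
      simp only [Finset.mem_Icc]
      have : t m ≤ t (M - 1) := htmono.monotone (by omega)
      omega
  have hEkey : Tendsto (fun m => E m / ((m : ℝ) + 2)) atTop (𝓝 0) :=
    keyAnalysis E (fun m => he0 (t m)) hEmono Gb hseries
  have hmain : Tendsto (fun n => e n / d n) atTop (𝓝 0) := by
    rw [Metric.tendsto_atTop]
    intro ε hε
    have hhalf : (0:ℝ) < ε / 2 := by linarith
    have h2' : Tendsto (fun m : ℕ => 1 / ((m : ℝ) + 2)) atTop (𝓝 0) := by
      have := (tendsto_atTop_add_const_right atTop (2:ℝ)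
        tendsto_natCast_atTop_atTop).inv_tendsto_atTop
      simpa [one_div, Pi.inv_def] using this
    have h1 : ∀ᶠ m in atTop, E m / ((m : ℝ) + 2) < ε / 2 :=
      hEkey.eventually_lt_const hhalf
    have h2 : ∀ᶠ (m : ℕ) in atTop, 1 / ((m : ℝ) + 2) < ε / 2 :=
      h2'.eventually_lt_const hhalf
    obtain ⟨M₁, hM₁⟩ := eventually_atTop.1 (h1.and h2)
    refine ⟨t M₁, fun n hn => ?_⟩
    rw [Real.dist_eq, sub_zero, abs_of_nonneg (div_nonneg (he0 n) (hdpos n).le)]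
    set Sset : Set ℕ := {m | t m ≤ n} with hSset
    have hneS : M₁ ∈ Sset := hn
    have hbddS : BddAbove Sset := by
      refine ⟨n, fun m hm => ?_⟩
      exact le_trans (Nat.le_nth fun hf => absurd hf hinf') hm
    have hmem := Nat.sSup_mem ⟨M₁, hneS⟩ hbddS
    set ms := sSup Sset with hms
    have hms1 : t ms ≤ n := hmem
    have hmsM : M₁ ≤ ms := le_csSup hbddS hneS
    have hnext : n < t (ms + 1) := by
      by_contra hcon
      push_neg at hcon
      have : ms + 1 ≤ ms := le_csSup hbddS (show ms + 1 ∈ Sset from hcon)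
      omega
    have hnov : ∀ i, t ms < i → i ≤ n → ¬ (X i ω = x + 2) := by
      intro i hi1 hi2 hpi
      have hnth : Nat.nth p (Nat.count p i) = i := Nat.nth_count hpi
      have hcle : Nat.count p i ≤ ms := le_csSup hbddS (show Nat.count p i ∈ Sset from by
        simp only [hSset, Set.mem_setOf_eq, ht]
        omega)
      have : t (Nat.count p i) ≤ t ms := htmono.monotone hcle
      rw [show t (Nat.count p i) = i from hnth] at this
      omega
    have hZbn : Znum X n (x + 2) ω = Znum X (t ms) (x + 2) ω := by
      have hdiff := Znum_diff (X := X) (ω := ω) (x + 2) hms1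
      have hzero : ∑ i ∈ Icc (t ms + 1) n, ind X i (x + 2) ω = 0 :=
        Finset.sum_eq_zero fun i hi => by
          simp only [Finset.mem_Icc] at hi
          unfold ind
          rw [if_neg (hnov i (by omega) hi.2)]
      linarith
    have hkey : e n / d n ≤ (E (ms + 1) + 1) / d (t (ms + 1)) := by
      have hu0 : 0 ≤ e (t ms) := he0 _
      have huw : e (t ms) ≤ d (t ms) := by
        have := Znum_pos (X := X) (ω := ω) (t ms) (x + 2)
        simp only [he]
        linarith
      have hs0 : 0 ≤ d n - d (t ms) := sub_nonneg.2 (hdmono hms1)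
      have hstt : d n - d (t ms) ≤ d (t (ms + 1)) - d (t ms) := by
        have := hdmono (le_of_lt hnext)
        linarith
      have hen : e n = e (t ms) + (d n - d (t ms)) := by
        simp only [he]
        rw [hZbn]
        ring
      have hdn' : d n = d (t ms) + (d n - d (t ms)) := by ring
      have hej' : E (ms + 1) + 1 = e (t ms) + (d (t (ms + 1)) - d (t ms)) := by
        have h1 : E (ms + 1) = d (t (ms + 1)) - Znum X (t (ms + 1)) (x + 2) ω := rfl
        have h2 : e (t ms) = d (t ms) - Znum X (t ms) (x + 2) ω := rfl
        rw [h1, h2, hZbt (ms + 1), hZbt ms]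
        push_cast
        ring
      have hdj' : d (t (ms + 1)) = d (t ms) + (d (t (ms + 1)) - d (t ms)) := by ring
      calc e n / d n = (e (t ms) + (d n - d (t ms))) / (d (t ms) + (d n - d (t ms))) := by
              rw [← hen, ← hdn']
        _ ≤ (e (t ms) + (d (t (ms + 1)) - d (t ms)))
              / (d (t ms) + (d (t (ms + 1)) - d (t ms))) :=
              mediant hu0 huw (hdpos _) hs0 hstt
        _ = (E (ms + 1) + 1) / d (t (ms + 1)) := by rw [← hej', ← hdj']
    have hfin : (E (ms + 1) + 1) / d (t (ms + 1)) < ε := by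
      obtain ⟨hA, hB⟩ := hM₁ (ms + 1) (by omega)
      have hcast : ((ms + 1 : ℕ) : ℝ) + 2 = (ms : ℝ) + 3 := by push_cast; ring
      rw [hcast] at hA hB
      have hd1 : ((ms : ℝ) + 3) ≤ d (t (ms + 1)) := by
        rw [hdt (ms + 1)]
        have := he0 (t (ms + 1))
        have hE0' : 0 ≤ E (ms + 1) := this
        push_cast
        linarith
      have hdpos' := hdpos (t (ms + 1))
      have hms3 : (0:ℝ) < (ms : ℝ) + 3 := by positivity
      have hEnn : 0 ≤ E (ms + 1) := he0 _
      calc (E (ms + 1) + 1) / d (t (ms + 1))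
          ≤ (E (ms + 1) + 1) / ((ms : ℝ) + 3) :=
            div_le_div_of_nonneg_left (by linarith) hms3 hd1 |>.trans_eq rfl
        _ = E (ms + 1) / ((ms : ℝ) + 3) + 1 / ((ms : ℝ) + 3) := by ring
        _ < ε / 2 + ε / 2 := by
            apply add_lt_add
            · calc E (ms + 1) / ((ms : ℝ) + 3) ≤ E (ms + 1) / ((ms : ℝ) + 3) := le_rfl
                _ < ε / 2 := hA
            · exact hB
        _ = ε := by ring
    linarith
  have hfun : (fun n => Znum X n (x + 2) ω / (Znum X n (x + 1) ω + Znum X n (x + 3) ω))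
      = fun n => 1 - e n / d n := by
    funext n
    have h1 := (hdpos n).ne'
    field_simp [he]
    rw [show Znum X n (x + 1) ω + Znum X n (x + 3) ω = d n from rfl, mul_div_assoc, div_self h1, mul_one]
    simp only [he]
    ring
  rw [hfun]
  have hone : Tendsto (fun _ : ℕ => (1:ℝ)) atTop (𝓝 1) := tendsto_const_nhds
  simpa using hone.sub hmain

end Rto1

section CrossHelpers

/-- crossing indicator -/
noncomputable def cind (X : ℕ → Ω → ℤ) (k : ℕ) (y z : ℤ) (ω : Ω) : ℝ :=
  if X (k - 1) ω = y ∧ X k ω = z then (1 : ℝ) else 0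

lemma cind_nonneg (k : ℕ) (y z : ℤ) : 0 ≤ cind X k y z ω := by
  unfold cind; split <;> norm_num

lemma cind_cases (k : ℕ) (y z : ℤ) : cind X k y z ω = 0 ∨ cind X k y z ω = 1 := by
  unfold cind; split <;> simp

/-- crossing sum with pre-crossing denominator -/
noncomputable def Ypre (X : ℕ → Ω → ℤ) (y z : ℤ) (n : ℕ) (ω : Ω) : ℝ :=
  ∑ k ∈ Icc 1 n, cind X k y z ω / Znum X (k - 1) z ω

/-- crossing sum with post-crossing denominator -/
noncomputable def Ypost (X : ℕ → Ω → ℤ) (y z : ℤ) (n : ℕ) (ω : Ω) : ℝ :=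
  ∑ k ∈ Icc 1 n, cind X k y z ω / Znum X k z ω

lemma Znum_succ_of_visit {k : ℕ} {z : ℤ} (hk : 1 ≤ k) (h : X k ω = z) :
    Znum X k z ω = Znum X (k - 1) z ω + 1 := by
  obtain ⟨j, rfl⟩ : ∃ j, k = j + 1 := ⟨k - 1, by omega⟩
  rw [Znum_eq, Znum_eq, vct_succ, if_pos h]
  push_cast
  simp

lemma Znum_same_of_no_visit {k : ℕ} {z : ℤ} (hk : 1 ≤ k) (h : ¬ X k ω = z) :
    Znum X k z ω = Znum X (k - 1) z ω := by
  obtain ⟨j, rfl⟩ : ∃ j, k = j + 1 := ⟨k - 1, by omega⟩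
  rw [Znum_eq, Znum_eq, vct_succ, if_neg h]
  simp

lemma err_eq (y z : ℤ) (n : ℕ) :
    Ypre X y z n ω - Ypost X y z n ω
      = ∑ k ∈ Icc 1 n, cind X k y z ω * (1 / Znum X (k - 1) z ω - 1 / Znum X k z ω) := by
  unfold Ypre Ypost
  rw [← Finset.sum_sub_distrib]
  refine Finset.sum_congr rfl fun k _ => ?_
  rw [mul_sub]
  congr 1 <;> rw [mul_one_div]

lemma err_term_nonneg (y z : ℤ) (k : ℕ) (hk : 1 ≤ k) :
    0 ≤ cind X k y z ω * (1 / Znum X (k - 1) z ω - 1 / Znum X k z ω) := by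
  refine mul_nonneg (cind_nonneg k y z) (sub_nonneg.2 ?_)
  apply one_div_le_one_div_of_le (Znum_pos _ _)
  exact Znum_mono (by omega) z

lemma cind_sum_le (y z : ℤ) (m : ℕ) :
    ∑ j ∈ Icc 1 m, cind X j y z ω ≤ Znum X m z ω - 1 := by
  rw [Znum_sum_ind]
  have h1 : ∑ j ∈ Icc 1 m, cind X j y z ω ≤ ∑ j ∈ Icc 1 m, ind X j z ω := by
    refine Finset.sum_le_sum fun j _ => ?_
    unfold cind ind
    split
    · rw [if_pos (by tauto)]
    · split <;> norm_num
  have h2 : ∑ j ∈ Icc 1 m, ind X j z ω ≤ ∑ j ∈ Finset.range (m + 1), ind X j z ω := by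
    rw [range_eq_Icc0]
    exact Finset.sum_le_sum_of_subset_of_nonneg (Finset.Icc_subset_Icc_left (by omega))
      fun j _ _ => ind_nonneg j z
  linarith

lemma err_bdd (y z : ℤ) (n : ℕ) :
    ∑ k ∈ Icc 1 n, cind X k y z ω * (1 / Znum X (k - 1) z ω - 1 / Znum X k z ω) ≤ 2 := by
  have key := sq_series_bound (fun k => cind X k y z ω) (fun k => Znum X (k - 1) z ω)
    (fun k => cind_cases k y z)
    (fun k hk hone => by
      have := cind_sum_le (X := X) (ω := ω) y z (k - 1)
      have h2 : ∑ j ∈ Icc 1 (k - 1), cind X j y z ω ≤ Znum X (k - 1) z ω - 1 := this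
      linarith) n
  have hle : ∑ k ∈ Icc 1 n, cind X k y z ω * (1 / Znum X (k - 1) z ω - 1 / Znum X k z ω)
      ≤ ∑ k ∈ Icc 1 n, cind X k y z ω / (Znum X (k - 1) z ω) ^ 2 := by
    refine Finset.sum_le_sum fun k hk => ?_
    simp only [Finset.mem_Icc] at hk
    rcases cind_cases (X := X) (ω := ω) k y z with h | h
    · rw [h]; simp
    · have hz : X k ω = z := by
        have h1 : cind X k y z ω = 1 := h
        unfold cind at h1
        by_contra hc
        rw [if_neg (by tauto)] at h1
        norm_num at h1
      have hsucc := Znum_succ_of_visit (X := X) (ω := ω) (by omega : 1 ≤ k) hz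
      have hpos := Znum_pos (X := X) (ω := ω) (k - 1) z
      rw [h, one_mul, hsucc]
      have h1 : (0:ℝ) < Znum X (k - 1) z ω + 1 := by linarith
      have e : 1 / Znum X (k - 1) z ω - 1 / (Znum X (k - 1) z ω + 1)
          = 1 / (Znum X (k - 1) z ω * (Znum X (k - 1) z ω + 1)) := by
        field_simp
        ring
      rw [e]
      apply one_div_le_one_div_of_le (by positivity)
      nlinarith
  have hs0 : (0:ℝ) ≤ ∑ k ∈ Icc 1 n, cind X k y z ω :=
    Finset.sum_nonneg fun k _ => cind_nonneg k y z
  have h2 : 2 - 2 / (1 + ∑ k ∈ Icc 1 n, cind X k y z ω) ≤ 2 := by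
    have : 0 < 1 + ∑ k ∈ Icc 1 n, cind X k y z ω := by linarith
    have : 0 ≤ 2 / (1 + ∑ k ∈ Icc 1 n, cind X k y z ω) := by positivity
    linarith
  linarith

end CrossHelpers

section MoreHelpers

lemma Yplus_eq_Ypre (x : ℤ) (n : ℕ) : Yplus X n x ω = Ypre X x (x + 1) n ω := rfl

lemma Yminus_eq_Ypre (x : ℤ) (n : ℕ) : Yminus X n (x + 2) ω = Ypre X (x + 2) (x + 1) n ω := by
  unfold Yminus Ypre cind
  simp only [show (x : ℤ) + 2 - 1 = x + 1 by ring]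

lemma Ynum_x2 (x : ℤ) (n : ℕ) : Ynum X n (x + 2) ω
    = ∑ k ∈ Icc 1 n, ind X (k - 1) (x + 2) ω
        / (Znum X (k - 1) (x + 1) ω + Znum X (k - 1) (x + 3) ω) := by
  unfold Ynum ind
  simp only [show (x : ℤ) + 2 - 1 = x + 1 by ring, show (x : ℤ) + 2 + 1 = x + 3 by ring]

lemma alphaMinus_eq (x : ℤ) (n : ℕ) : alphaMinus X n (x + 2) ω
    = Znum X n (x + 1) ω / (Znum X n (x + 1) ω + Znum X n (x + 3) ω) := by
  unfold alphaMinus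
  simp only [show (x : ℤ) + 2 - 1 = x + 1 by ring, show (x : ℤ) + 2 + 1 = x + 3 by ring]

lemma err_conv (y z : ℤ) :
    ∃ c, Tendsto (fun n => Ypre X y z n ω - Ypost X y z n ω) atTop (𝓝 c) := by
  have hfun : (fun n => Ypre X y z n ω - Ypost X y z n ω)
      = fun n => ∑ k ∈ Icc 1 n, cind X k y z ω
          * (1 / Znum X (k - 1) z ω - 1 / Znum X k z ω) := funext fun n => err_eq y z n
  rw [hfun]
  refine exists_tendsto_of_mono_bdd _ (mono_sum_Icc _ fun k hk => err_term_nonneg y z k hk) ?_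
  refine ⟨2, ?_⟩
  rintro r ⟨n, rfl⟩
  exact err_bdd y z n

lemma real_unbdd_tendsto (f : ℕ → ℝ) (hm : Monotone f)
    (hb : ¬ BddAbove (Set.range f)) : Tendsto f atTop atTop := by
  rw [tendsto_atTop]
  intro b
  obtain ⟨n, hn⟩ : ∃ n, b ≤ f n := by
    by_contra hc
    push_neg at hc
    exact hb ⟨b, by rintro y ⟨m, rfl⟩; exact (hc m).le⟩
  exact eventually_atTop.2 ⟨n, fun m hmn => hn.trans (hm hmn)⟩

lemma f_to_zero (v : ℤ) : Tendsto (fun n => ind X n v ω / Znum X n v ω) atTop (𝓝 0) := by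
  by_cases Hb : BddAbove (Set.range fun n => Znum X n v ω)
  · have hvb : BddAbove (Set.range fun n => ((vct X n v ω : ℕ) : ℝ)) := by
      obtain ⟨K, hK⟩ := Hb
      refine ⟨K, ?_⟩
      rintro y ⟨n, rfl⟩
      have h1 := hK (Set.mem_range_self n)
      rw [Znum_eq] at h1
      simp only
      linarith
    obtain ⟨N, hN⟩ := nat_ev_const _ (vct_mono v) hvb
    have hev : ∀ᶠ n in atTop, ind X n v ω / Znum X n v ω = 0 := by
      rw [eventually_atTop]
      refine ⟨N + 1, fun n hn => ?_⟩
      have hnot : ¬ X n ω = v := by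
        intro hx
        have h1 : vct X n v ω = vct X N v ω := hN n (by omega)
        have h2 : vct X (n - 1) v ω = vct X N v ω := hN (n - 1) (by omega)
        have h3 : vct X n v ω = vct X (n - 1) v ω + 1 := by
          obtain ⟨j, rfl⟩ : ∃ j, n = j + 1 := ⟨n - 1, by omega⟩
          rw [vct_succ, if_pos hx]
          simp
        omega
      unfold ind
      rw [if_neg hnot]
      simp
    exact Tendsto.congr' (by filter_upwards [hev] with n h using h.symm) tendsto_const_nhds
  · have hzt : Tendsto (fun n => Znum X n v ω) atTop atTop :=
      real_unbdd_tendsto _ (fun a b hab => Znum_mono hab v) Hb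
    have hinv : Tendsto (fun n => 1 / Znum X n v ω) atTop (𝓝 0) := by
      simpa [one_div, Pi.inv_def] using hzt.inv_tendsto_atTop
    refine squeeze_zero (fun n => div_nonneg (ind_nonneg n v) (Znum_pos n v).le)
      (fun n => ?_) hinv
    exact (div_le_div_iff_of_pos_right (Znum_pos n v)).2 (ind_le_one n v)

lemma alpha_zero (x : ℤ) (hnn : ∀ n, X (n + 1) ω = X n ω + 1 ∨ X (n + 1) ω = X n ω - 1)
    (hβ : Tendsto (fun n => Znum X n (x + 1) ω / Znum X n (x + 2) ω) atTop (𝓝 0)) :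
    Tendsto (fun n => alphaMinus X n (x + 2) ω) atTop (𝓝 0) := by
  have hfun : (fun n => alphaMinus X n (x + 2) ω)
      = fun n => Znum X n (x + 1) ω / (Znum X n (x + 1) ω + Znum X n (x + 3) ω) :=
    funext fun n => alphaMinus_eq x n
  rw [hfun]
  refine squeeze_zero (fun n => div_nonneg (Znum_pos n (x + 1)).le
    (add_pos (Znum_pos n (x + 1)) (Znum_pos n (x + 3))).le) (fun n => ?_) hβ
  have hnb := neighbor (X := X) (ω := ω) hnn n (x + 2)
  rw [show (x : ℤ) + 2 - 1 = x + 1 by ring, show (x : ℤ) + 2 + 1 = x + 3 by ring] at hnb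
  exact div_le_div_of_nonneg_left (Znum_pos n (x + 1)).le (Znum_pos n (x + 2)) hnb

lemma vct_card (v : ℤ) (n : ℕ) :
    vct X n v ω = ((Finset.range (n + 1)).filter (fun i => X i ω = v)).card := by
  unfold vct
  rw [Finset.sum_boole]
  simp

lemma infinite_of_unbdd (v : ℤ) (hb : ¬ BddAbove (Set.range fun n => Znum X n v ω)) :
    {j | X j ω = v}.Infinite := by
  by_contra hfin
  rw [Set.not_infinite] at hfin
  apply hb
  refine ⟨(hfin.toFinset.card : ℝ) + 1, ?_⟩
  rintro y ⟨n, rfl⟩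
  simp only
  rw [Znum_eq]
  have hcard : vct X n v ω ≤ hfin.toFinset.card := by
    rw [vct_card]
    apply Finset.card_le_card
    intro i hi
    simp only [Finset.mem_filter] at hi
    exact hfin.mem_toFinset.2 hi.2
  have : (vct X n v ω : ℝ) ≤ (hfin.toFinset.card : ℝ) := by exact_mod_cast hcard
  linarith

lemma A_split (x : ℤ) (hnn : ∀ n, X (n + 1) ω = X n ω + 1 ∨ X (n + 1) ω = X n ω - 1) (n : ℕ) :
    ∑ k ∈ Icc 1 n, ind X k (x + 1) ω / Znum X k (x + 1) ω
      = Ypost X x (x + 1) n ω + Ypost X (x + 2) (x + 1) n ω := by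
  unfold Ypost
  rw [← Finset.sum_add_distrib]
  refine Finset.sum_congr rfl fun k hk => ?_
  simp only [Finset.mem_Icc] at hk
  have hnum : ind X k (x + 1) ω = cind X k x (x + 1) ω + cind X k (x + 2) (x + 1) ω := by
    unfold ind cind
    by_cases h : X k ω = x + 1
    · obtain ⟨j, rfl⟩ : ∃ j, k = j + 1 := ⟨k - 1, by omega⟩
      simp only [Nat.add_sub_cancel]
      rcases pred_nbr hnn j (x + 1) h with h' | h'
      · have hx : X j ω = x := by omega
        rw [if_pos h, if_pos ⟨hx, h⟩, if_neg (by rintro ⟨h2, _⟩; omega)]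
        norm_num
      · have hx : X j ω = x + 2 := by omega
        rw [if_pos h, if_neg (by rintro ⟨h2, _⟩; omega), if_pos ⟨hx, h⟩]
        norm_num
    · rw [if_neg h, if_neg (by tauto), if_neg (by tauto)]
      norm_num
  rw [hnum]
  ring

lemma B_shift (v : ℤ) (n : ℕ) :
    ∑ k ∈ Icc 1 n, ind X k v ω / Znum X k v ω
      = (∑ k ∈ Icc 1 n, ind X (k - 1) v ω / Znum X (k - 1) v ω)
        + ind X n v ω / Znum X n v ω - ind X 0 v ω / Znum X 0 v ω := by
  set f : ℕ → ℝ := fun j => ind X j v ω / Znum X j v ω with hf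
  have h1 : ∑ k ∈ Icc 1 n, f (k - 1) = ∑ j ∈ Finset.range n, f j := shift_sum' f n
  have h2 : ∑ j ∈ Finset.range (n + 1), f j = f 0 + ∑ k ∈ Icc 1 n, f k := range_succ_split f n
  have h3 : ∑ j ∈ Finset.range (n + 1), f j = ∑ j ∈ Finset.range n, f j + f n :=
    Finset.sum_range_succ f n
  have hgoal : ∑ k ∈ Icc 1 n, f k = (∑ k ∈ Icc 1 n, f (k - 1)) + f n - f 0 := by
    rw [h1]
    linarith
  exact hgoal

end MoreHelpers

section Main

lemma unbdd_vct_of_unbddZ (v : ℤ) (hb : ¬ BddAbove (Set.range fun n => Znum X n v ω)) :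
    ¬ BddAbove (Set.range fun n => ((vct X n v ω : ℕ) : ℝ)) := by
  intro hc
  obtain ⟨K, hK⟩ := hc
  apply hb
  refine ⟨K + 1, ?_⟩
  rintro y ⟨n, rfl⟩
  have := hK (Set.mem_range_self n)
  simp only at this ⊢
  rw [Znum_eq]
  linarith

lemma bdd_vct_of_bddZ (v : ℤ) (hb : BddAbove (Set.range fun n => Znum X n v ω)) :
    BddAbove (Set.range fun n => ((vct X n v ω : ℕ) : ℝ)) := by
  obtain ⟨K, hK⟩ := hb
  refine ⟨K, ?_⟩
  rintro y ⟨n, rfl⟩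
  have h1 := hK (Set.mem_range_self n)
  rw [Znum_eq] at h1
  simp only
  linarith

set_option maxHeartbeats 1000000 in
theorem pathwise_main (x : ℤ)
    (hnn : ∀ n, X (n + 1) ω = X n ω + 1 ∨ X (n + 1) ω = X n ω - 1)
    (hM : ∃ c, Tendsto (fun n => Yminus X n (x + 2) ω - Ynum X n (x + 2) ω) atTop (𝓝 c))
    (hMp : ∃ c, Tendsto (fun n => Yplus X n x ω - Ynum X n x ω) atTop (𝓝 c))
    (hY : BddAbove (Set.range fun n => Ynum X n x ω)) :
    ∃ l : ℝ, 0 ≤ l ∧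
      Tendsto (fun n => Znum X n (x + 1) ω / Znum X n (x + 2) ω) atTop (𝓝 l) ∧
      (¬ BddAbove (Set.range fun n => Znum X n (x + 2) ω) →
        Tendsto (fun n => alphaMinus X n (x + 2) ω) atTop (𝓝 l)) := by
  classical
  -- Yplus converges
  have hYpmono : Monotone (fun n => Yplus X n x ω) := by
    apply mono_sum_Icc
    intro k _
    refine div_nonneg ?_ (Znum_pos _ _).le
    split <;> norm_num
  have hYp : ∃ c, Tendsto (fun n => Yplus X n x ω) atTop (𝓝 c) := by
    obtain ⟨c, hc⟩ := hMp
    obtain ⟨K2, hK2⟩ := hc.bddAbove_range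
    obtain ⟨K1, hK1⟩ := hY
    refine exists_tendsto_of_mono_bdd _ hYpmono ⟨K1 + K2, ?_⟩
    rintro r ⟨n, rfl⟩
    have h1 := hK1 (Set.mem_range_self n)
    have h2 := hK2 (Set.mem_range_self n)
    simp only at h1 h2 ⊢
    linarith
  obtain ⟨cP, hcP⟩ := err_conv (X := X) (ω := ω) x (x + 1)
  obtain ⟨cQ, hcQ⟩ := err_conv (X := X) (ω := ω) (x + 2) (x + 1)
  obtain ⟨cM, hcM⟩ := hM
  obtain ⟨cYp, hcYp⟩ := hYp
  set A : ℕ → ℝ := fun n => ∑ k ∈ Icc 1 n, ind X k (x + 1) ω / Znum X k (x + 1) ω with hA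
  set B : ℕ → ℝ := fun n => ∑ k ∈ Icc 1 n, ind X k (x + 2) ω / Znum X k (x + 2) ω with hB
  set Bt : ℕ → ℝ := fun n =>
    ∑ k ∈ Icc 1 n, ind X (k - 1) (x + 2) ω / Znum X (k - 1) (x + 2) ω with hBt
  set W : ℕ → ℝ := fun n => ∑ k ∈ Icc 1 n,
    (ind X (k - 1) (x + 2) ω / Znum X (k - 1) (x + 2) ω
      - ind X (k - 1) (x + 2) ω / (Znum X (k - 1) (x + 1) ω + Znum X (k - 1) (x + 3) ω))
    with hW
  set fz : ℕ → ℝ := fun n => ind X n (x + 2) ω / Znum X n (x + 2) ω with hfz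
  -- W basic facts
  have hnbr : ∀ n, Znum X n (x + 2) ω ≤ Znum X n (x + 1) ω + Znum X n (x + 3) ω := by
    intro n
    have h := neighbor (X := X) (ω := ω) hnn n (x + 2)
    rw [show (x : ℤ) + 2 - 1 = x + 1 by ring, show (x : ℤ) + 2 + 1 = x + 3 by ring] at h
    exact h
  have hw0 : ∀ k, 0 ≤ ind X (k - 1) (x + 2) ω / Znum X (k - 1) (x + 2) ω
      - ind X (k - 1) (x + 2) ω / (Znum X (k - 1) (x + 1) ω + Znum X (k - 1) (x + 3) ω) := by
    intro k
    have h1 : ind X (k - 1) (x + 2) ω / (Znum X (k - 1) (x + 1) ω + Znum X (k - 1) (x + 3) ω)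
        ≤ ind X (k - 1) (x + 2) ω / Znum X (k - 1) (x + 2) ω :=
      div_le_div_of_nonneg_left (ind_nonneg _ _) (Znum_pos _ _) (hnbr (k - 1))
    linarith
  have hWmono : Monotone W := mono_sum_Icc _ fun k _ => hw0 k
  have hWnn : ∀ n, 0 ≤ W n := fun n => Finset.sum_nonneg fun k _ => hw0 k
  -- R and its convergence
  have hfz0 : Tendsto fz atTop (𝓝 0) := f_to_zero (x + 2)
  set R : ℕ → ℝ := fun n =>
    ((((Yplus X n x ω - (Ypre X x (x + 1) n ω - Ypost X x (x + 1) n ω))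
      + (Yminus X n (x + 2) ω - Ynum X n (x + 2) ω))
      - (Ypre X (x + 2) (x + 1) n ω - Ypost X (x + 2) (x + 1) n ω)) - fz n) + fz 0 with hR
  set rl : ℝ := ((((cYp - cP) + cM) - cQ) - 0) + fz 0 with hrl
  have hRconv : Tendsto R atTop (𝓝 rl) :=
    ((((hcYp.sub hcP).add hcM).sub hcQ).sub hfz0).add_const (fz 0)
  -- the identity A - B = -W + R
  have hWeq : ∀ n, W n = Bt n - Ynum X n (x + 2) ω := by
    intro n
    rw [Ynum_x2]
    simp only [hW, hBt]
    rw [Finset.sum_sub_distrib]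
  have hSid : ∀ n, A n - B n = -W n + R n := by
    intro n
    have h1 : A n = Ypost X x (x + 1) n ω + Ypost X (x + 2) (x + 1) n ω := A_split x hnn n
    have h2 : Yplus X n x ω = Ypre X x (x + 1) n ω := Yplus_eq_Ypre x n
    have h3 : Yminus X n (x + 2) ω = Ypre X (x + 2) (x + 1) n ω := Yminus_eq_Ypre x n
    have h4 : B n = Bt n + fz n - fz 0 := B_shift (x + 2) n
    have h5 := hWeq n
    simp only [hR]
    linarith
  -- telescopes
  have hAtel : ∀ n, A n = ((harmonic (vct X n (x + 1) ω + 1) : ℚ) : ℝ)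
      - ((harmonic (vct X 0 (x + 1) ω + 1) : ℚ) : ℝ) := telescope (x + 1)
  have hBtel : ∀ n, B n = ((harmonic (vct X n (x + 2) ω + 1) : ℚ) : ℝ)
      - ((harmonic (vct X 0 (x + 2) ω + 1) : ℚ) : ℝ) := telescope (x + 2)
  set c₀ : ℝ := ((harmonic (vct X 0 (x + 1) ω + 1) : ℚ) : ℝ)
    - ((harmonic (vct X 0 (x + 2) ω + 1) : ℚ) : ℝ) with hc₀
  have hHid : ∀ n, ((harmonic (vct X n (x + 1) ω + 1) : ℚ) : ℝ)
      - ((harmonic (vct X n (x + 2) ω + 1) : ℚ) : ℝ) = (A n - B n) + c₀ := by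
    intro n
    rw [hAtel n, hBtel n, hc₀]
    ring
  by_cases Hb : BddAbove (Set.range fun n => Znum X n (x + 2) ω)
  · by_cases Ha : BddAbove (Set.range fun n => Znum X n (x + 1) ω)
    · -- both visited finitely often
      obtain ⟨N1, hN1⟩ := nat_ev_const _ (vct_mono (x + 1)) (bdd_vct_of_bddZ _ Ha)
      obtain ⟨N2, hN2⟩ := nat_ev_const _ (vct_mono (x + 2)) (bdd_vct_of_bddZ _ Hb)
      set N := max N1 N2 with hN
      have hZ1 : ∀ n, N ≤ n → Znum X n (x + 1) ω = Znum X N (x + 1) ω := by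
        intro n hn
        rw [Znum_eq, Znum_eq, hN1 n (le_trans (le_max_left _ _) hn), hN1 N (le_max_left _ _)]
      have hZ2 : ∀ n, N ≤ n → Znum X n (x + 2) ω = Znum X N (x + 2) ω := by
        intro n hn
        rw [Znum_eq, Znum_eq, hN2 n (le_trans (le_max_right _ _) hn), hN2 N (le_max_right _ _)]
      refine ⟨Znum X N (x + 1) ω / Znum X N (x + 2) ω,
        div_nonneg (Znum_pos _ _).le (Znum_pos _ _).le, ?_, fun hcon => (hcon Hb).elim⟩
      apply Tendsto.congr' ?_ (tendsto_const_nhds)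
      filter_upwards [eventually_ge_atTop N] with n hn
      rw [hZ1 n hn, hZ2 n hn]
    · -- x+1 infinitely, x+2 finitely: impossible
      exfalso
      obtain ⟨KR, hKR⟩ := hRconv.bddAbove_range
      have hSub : ∀ n, A n - B n ≤ KR := by
        intro n
        have h1 := hSid n
        have h2 := hKR (Set.mem_range_self n)
        have h3 := hWnn n
        linarith
      obtain ⟨N2, hN2⟩ := nat_ev_const _ (vct_mono (x + 2)) (bdd_vct_of_bddZ _ Hb)
      set Kh : ℝ := ((harmonic (vct X N2 (x + 2) ω + 1) : ℚ) : ℝ) with hKh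
      have haT : Tendsto (fun n => vct X n (x + 1) ω) atTop atTop :=
        nat_tendsto_atTop _ (vct_mono (x + 1)) (unbdd_vct_of_unbddZ _ Ha)
      have hH1 : Tendsto (fun n => ((harmonic (vct X n (x + 1) ω + 1) : ℚ) : ℝ)) atTop atTop := by
        have hcomp := harm_tendsto_atTop.comp
          (tendsto_atTop_mono (fun n => Nat.le_succ _) haT)
        exact hcomp
      have hStop : Tendsto (fun n => A n - B n) atTop atTop := by
        have hEv : (fun n => ((harmonic (vct X n (x + 1) ω + 1) : ℚ) : ℝ) + (-Kh - c₀))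
            =ᶠ[atTop] (fun n => A n - B n) := by
          filter_upwards [eventually_ge_atTop N2] with n hn
          have h1 := hHid n
          rw [hN2 n hn] at h1
          rw [← hKh] at h1
          linarith
        exact (tendsto_atTop_add_const_right atTop (-Kh - c₀) hH1).congr' hEv
      obtain ⟨n, hn⟩ := (hStop.eventually_gt_atTop KR).exists
      exact absurd (hSub n) (not_le.2 hn)
  · -- x+2 visited infinitely often
    have hbinf : {j | X j ω = x + 2}.Infinite := infinite_of_unbdd (x + 2) Hb
    have hbT : Tendsto (fun n => Znum X n (x + 2) ω) atTop atTop :=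
      real_unbdd_tendsto _ (fun a b hab => Znum_mono hab (x + 2)) Hb
    by_cases Ha : BddAbove (Set.range fun n => Znum X n (x + 1) ω)
    · -- limit 0 by squeezing
      obtain ⟨K1, hK1⟩ := Ha
      have hβ0 : Tendsto (fun n => Znum X n (x + 1) ω / Znum X n (x + 2) ω) atTop (𝓝 0) := by
        refine squeeze_zero (g := fun n => K1 / Znum X n (x + 2) ω)
          (fun n => div_nonneg (Znum_pos _ _).le (Znum_pos _ _).le)
          (fun n => ?_) ?_
        · exact (div_le_div_iff_of_pos_right (Znum_pos n (x + 2))).2 (hK1 (Set.mem_range_self n))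
        · have hconst : Tendsto (fun _ : ℕ => K1) atTop (𝓝 K1) := tendsto_const_nhds
          have := hconst.mul hbT.inv_tendsto_atTop
          simpa [div_eq_mul_inv] using this
      exact ⟨0, le_rfl, hβ0, fun _ => alpha_zero x hnn hβ0⟩
    · -- both sites visited infinitely often
      have haT : Tendsto (fun n => vct X n (x + 1) ω) atTop atTop :=
        nat_tendsto_atTop _ (vct_mono (x + 1)) (unbdd_vct_of_unbddZ _ Ha)
      have hbTn : Tendsto (fun n => vct X n (x + 2) ω) atTop atTop :=
        nat_tendsto_atTop _ (vct_mono (x + 2)) (unbdd_vct_of_unbddZ _ Hb)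
      set g1 : ℕ → ℝ := fun n => ((harmonic (vct X n (x + 1) ω + 1) : ℚ) : ℝ)
        - Real.log ((vct X n (x + 1) ω + 1 : ℕ) : ℝ) with hg1def
      set g2 : ℕ → ℝ := fun n => ((harmonic (vct X n (x + 2) ω + 1) : ℚ) : ℝ)
        - Real.log ((vct X n (x + 2) ω + 1 : ℕ) : ℝ) with hg2def
      have hg1 : Tendsto g1 atTop (𝓝 Real.eulerMascheroniConstant) := by
        have := Real.tendsto_harmonic_sub_log.comp
          (tendsto_atTop_mono (fun n => Nat.le_succ _) haT)
        exact this
      have hg2 : Tendsto g2 atTop (𝓝 Real.eulerMascheroniConstant) := by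
        have := Real.tendsto_harmonic_sub_log.comp
          (tendsto_atTop_mono (fun n => Nat.le_succ _) hbTn)
        exact this
      have hβpos : ∀ n, 0 < Znum X n (x + 1) ω / Znum X n (x + 2) ω :=
        fun n => div_pos (Znum_pos _ _) (Znum_pos _ _)
      have hlogid : ∀ n, Real.log (Znum X n (x + 1) ω / Znum X n (x + 2) ω)
          = ((A n - B n) + c₀) - g1 n + g2 n := by
        intro n
        rw [Real.log_div (Znum_pos _ _).ne' (Znum_pos _ _).ne']
        have e1 : Znum X n (x + 1) ω = ((vct X n (x + 1) ω + 1 : ℕ) : ℝ) := by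
          rw [Znum_eq]; push_cast; ring
        have e2 : Znum X n (x + 2) ω = ((vct X n (x + 2) ω + 1 : ℕ) : ℝ) := by
          rw [Znum_eq]; push_cast; ring
        rw [e1, e2]
        have h1 := hHid n
        simp only [hg1def, hg2def]
        linarith
      by_cases hGb : BddAbove (Set.range W)
      · obtain ⟨wl, hwl⟩ := exists_tendsto_of_mono_bdd W hWmono hGb
        have hS : Tendsto (fun n => A n - B n) atTop (𝓝 (-wl + rl)) := by
          have h1 := hwl.neg.add hRconv
          exact h1.congr fun n => (hSid n).symm
        set L : ℝ := (((-wl + rl) + c₀) - Real.eulerMascheroniConstant)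
          + Real.eulerMascheroniConstant with hL
        have hlogconv : Tendsto (fun n => Real.log (Znum X n (x + 1) ω / Znum X n (x + 2) ω))
            atTop (𝓝 L) := by
          have h1 := ((hS.add_const c₀).sub hg1).add hg2
          exact h1.congr fun n => (hlogid n).symm
        have hβ : Tendsto (fun n => Znum X n (x + 1) ω / Znum X n (x + 2) ω) atTop
            (𝓝 (Real.exp L)) := by
          have h1 := (Real.continuous_exp.continuousAt (x := L)).tendsto.comp hlogconv
          apply h1.congr
          intro n
          simp only [Function.comp_apply]
          exact Real.exp_log (hβpos n)
        refine ⟨Real.exp L, (Real.exp_pos L).le, hβ, fun _ => ?_⟩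
        obtain ⟨Gb0, hGb0⟩ := hGb
        have hr := rto1 (X := X) (ω := ω) hnn x hbinf Gb0
          (fun n => hGb0 (Set.mem_range_self n))
        have hαid : ∀ n, alphaMinus X n (x + 2) ω
            = (Znum X n (x + 1) ω / Znum X n (x + 2) ω)
              * (Znum X n (x + 2) ω / (Znum X n (x + 1) ω + Znum X n (x + 3) ω)) := by
          intro n
          rw [alphaMinus_eq, div_mul_div_comm, mul_comm (Znum X n (x + 1) ω),
            mul_div_mul_left _ _ (Znum_pos n (x + 2)).ne']
        have := hβ.mul hr
        rw [mul_one] at this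
        exact this.congr fun n => (hαid n).symm
      · have hWT : Tendsto W atTop atTop := real_unbdd_tendsto W hWmono hGb
        have hnegW : Tendsto (fun n => -W n) atTop atBot := by
          have := tendsto_neg_atTop_atBot.comp hWT
          exact this
        have hS : Tendsto (fun n => A n - B n) atTop atBot := by
          have h1 := hRconv.add_atBot hnegW
          have h2 : (fun n => R n + -W n) = fun n => -W n + R n := by
            funext n; ring
          rw [h2] at h1
          exact h1.congr fun n => (hSid n).symm
        have hconv2 : Tendsto (fun n => (c₀ - g1 n) + g2 n) atTop
            (𝓝 ((c₀ - Real.eulerMascheroniConstant) + Real.eulerMascheroniConstant)) :=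
          ((tendsto_const_nhds.sub hg1).add hg2)
        have hlogbot : Tendsto (fun n => Real.log (Znum X n (x + 1) ω / Znum X n (x + 2) ω))
            atTop atBot := by
          have h1 := hconv2.add_atBot hS
          have h2 : (fun n => ((c₀ - g1 n) + g2 n) + (A n - B n))
              = fun n => ((A n - B n) + c₀) - g1 n + g2 n := by
            funext n; ring
          rw [h2] at h1
          exact h1.congr fun n => (hlogid n).symm
        have hβ0 : Tendsto (fun n => Znum X n (x + 1) ω / Znum X n (x + 2) ω) atTop (𝓝 0) := by
          have h1 := Real.tendsto_exp_atBot.comp hlogbot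
          apply h1.congr
          intro n
          simp only [Function.comp_apply]
          exact Real.exp_log (hβpos n)
        exact ⟨0, le_rfl, hβ0, fun _ => alpha_zero x hnn hβ0⟩

end Main

section Prob

variable {m0 : MeasurableSpace Ω} {μ : Measure Ω} [IsProbabilityMeasure μ]
  {ℱ : Filtration ℕ m0} {v0 : ℤ}

lemma measurable_X (h : Adapted ℱ X) {k n : ℕ} (hk : k ≤ n) :
    Measurable[ℱ n] (X k) :=
  (h k).mono (ℱ.mono hk) le_rfl

lemma measurable_ind' (h : Adapted ℱ X) {k n : ℕ} (hk : k ≤ n) (v : ℤ) :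
    Measurable[ℱ n] fun ω => ind X k v ω := by
  have hset : MeasurableSet[ℱ n] {ω | X k ω = v} :=
    measurable_X h hk (measurableSet_singleton v)
  unfold ind
  exact Measurable.ite hset measurable_const measurable_const

lemma measurable_cind' (h : Adapted ℱ X) {k n : ℕ} (hk : k ≤ n) (y z : ℤ) :
    Measurable[ℱ n] fun ω => cind X k y z ω := by
  have hset : MeasurableSet[ℱ n] {ω | X (k - 1) ω = y ∧ X k ω = z} := by
    rw [Set.setOf_and]
    exact (measurable_X h (le_trans (Nat.sub_le k 1) hk) (measurableSet_singleton y)).inter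
      (measurable_X h hk (measurableSet_singleton z))
  unfold cind
  exact Measurable.ite hset measurable_const measurable_const

lemma measurable_Znum' (h : Adapted ℱ X) {k n : ℕ} (hk : k ≤ n) (v : ℤ) :
    Measurable[ℱ n] fun ω => Znum X k v ω := by
  have hterm : ∀ i ∈ Finset.range (k + 1), Measurable[ℱ n] fun ω => ind X i v ω := fun i hi =>
    measurable_ind' h (le_trans (by simp only [Finset.mem_range] at hi; omega) hk) v
  have hsum : Measurable[ℱ n] fun ω => ∑ i ∈ Finset.range (k + 1), ind X i v ω :=
    Finset.measurable_sum _ hterm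
  have heq : (fun ω => Znum X k v ω) = fun ω => 1 + ∑ i ∈ Finset.range (k + 1), ind X i v ω :=
    rfl
  rw [heq]
  exact measurable_const.add hsum

/-- the martingale `Y^{y→z}_n - Y_n(y)` -/
noncomputable def MG (X : ℕ → Ω → ℤ) (y z : ℤ) (n : ℕ) (ω : Ω) : ℝ :=
  Ypre X y z n ω - Ynum X n y ω

/-- its increments -/
noncomputable def DM (X : ℕ → Ω → ℤ) (y z : ℤ) (n : ℕ) (ω : Ω) : ℝ :=
  cind X (n + 1) y z ω / Znum X n z ω
    - ind X n y ω / (Znum X n (y - 1) ω + Znum X n (y + 1) ω)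

lemma Ynum_term_eq (y : ℤ) (n : ℕ) : Ynum X n y ω
    = ∑ k ∈ Icc 1 n, ind X (k - 1) y ω / (Znum X (k - 1) (y - 1) ω + Znum X (k - 1) (y + 1) ω) :=
  rfl

lemma MG_succ (y z : ℤ) (n : ℕ) : MG X y z (n + 1) ω = MG X y z n ω + DM X y z n ω := by
  unfold MG DM Ypre
  rw [Ynum_term_eq, Ynum_term_eq, Finset.sum_Icc_succ_top (by omega : 1 ≤ n + 1),
    Finset.sum_Icc_succ_top (by omega : 1 ≤ n + 1)]
  simp only [Nat.add_sub_cancel]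
  ring

lemma MG_zero (y z : ℤ) : MG X y z 0 ω = 0 := by
  unfold MG Ypre
  rw [Ynum_term_eq]
  simp

lemma measurable_Ypre (h : Adapted ℱ X) (y z : ℤ) (n : ℕ) :
    Measurable[ℱ n] fun ω => Ypre X y z n ω := by
  unfold Ypre
  refine Finset.measurable_sum _ fun k hk => ?_
  simp only [Finset.mem_Icc] at hk
  exact (measurable_cind' h hk.2 y z).div (measurable_Znum' h (by omega) z)

lemma measurable_Ynum (h : Adapted ℱ X) (y : ℤ) (n : ℕ) :
    Measurable[ℱ n] fun ω => Ynum X n y ω := by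
  rw [show (fun ω => Ynum X n y ω) = fun ω => ∑ k ∈ Icc 1 n,
    ind X (k - 1) y ω / (Znum X (k - 1) (y - 1) ω + Znum X (k - 1) (y + 1) ω) from rfl]
  refine Finset.measurable_sum _ fun k hk => ?_
  simp only [Finset.mem_Icc] at hk
  exact (measurable_ind' h (by omega) y).div
    ((measurable_Znum' h (by omega) (y - 1)).add (measurable_Znum' h (by omega) (y + 1)))

lemma measurable_MG (h : Adapted ℱ X) (y z : ℤ) (n : ℕ) :
    Measurable[ℱ n] fun ω => MG X y z n ω :=
  (measurable_Ypre h y z n).sub (measurable_Ynum h y n)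

lemma measurable_DM (h : Adapted ℱ X) (y z : ℤ) (n : ℕ) :
    Measurable[ℱ (n + 1)] fun ω => DM X y z n ω := by
  unfold DM
  refine Measurable.sub ?_ ?_
  · exact (measurable_cind' h le_rfl y z).div (measurable_Znum' h (by omega) z)
  · exact (measurable_ind' h (by omega) y).div
      ((measurable_Znum' h (by omega) (y - 1)).add (measurable_Znum' h (by omega) (y + 1)))

lemma Ypre_term_mem (y z : ℤ) (k : ℕ) :
    0 ≤ cind X k y z ω / Znum X (k - 1) z ω ∧ cind X k y z ω / Znum X (k - 1) z ω ≤ 1 := by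
  constructor
  · exact div_nonneg (cind_nonneg _ _ _) (Znum_pos _ _).le
  · rw [div_le_one (Znum_pos _ _)]
    rcases cind_cases (X := X) (ω := ω) k y z with h | h <;> rw [h]
    · exact (Znum_pos _ _).le
    · exact Znum_ge_one _ _

lemma Ynum_term_mem (y : ℤ) (k : ℕ) :
    0 ≤ ind X (k - 1) y ω / (Znum X (k - 1) (y - 1) ω + Znum X (k - 1) (y + 1) ω) ∧
      ind X (k - 1) y ω / (Znum X (k - 1) (y - 1) ω + Znum X (k - 1) (y + 1) ω) ≤ 1 := by
  have hD : (0:ℝ) < Znum X (k - 1) (y - 1) ω + Znum X (k - 1) (y + 1) ω :=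
    add_pos (Znum_pos _ _) (Znum_pos _ _)
  constructor
  · exact div_nonneg (ind_nonneg _ _) hD.le
  · rw [div_le_one hD]
    have h1 := ind_le_one (X := X) (ω := ω) (k - 1) y
    have h2 := Znum_ge_one (X := X) (ω := ω) (k - 1) (y - 1)
    have h3 := (Znum_pos (X := X) (ω := ω) (k - 1) (y + 1)).le
    linarith

lemma sum_Icc_abs_le (g : ℕ → ℝ) (h0 : ∀ k, 0 ≤ g k) (h1 : ∀ k, g k ≤ 1) (n : ℕ) :
    |∑ k ∈ Icc 1 n, g k| ≤ (n : ℝ) := by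
  rw [abs_of_nonneg (Finset.sum_nonneg fun k _ => h0 k)]
  calc ∑ k ∈ Icc 1 n, g k ≤ ∑ _k ∈ Icc 1 n, (1:ℝ) := Finset.sum_le_sum fun k _ => h1 k
    _ = ((Icc 1 n).card : ℝ) := by simp
    _ ≤ (n : ℝ) := by
        rw [Nat.card_Icc]
        exact_mod_cast Nat.le_of_eq (by omega) |>.trans (le_refl n)

lemma MG_bound (y z : ℤ) (n : ℕ) : |MG X y z n ω| ≤ 2 * n := by
  unfold MG
  have h1 := sum_Icc_abs_le (fun k => cind X k y z ω / Znum X (k - 1) z ω)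
    (fun k => (Ypre_term_mem y z k).1) (fun k => (Ypre_term_mem y z k).2) n
  have h2 := sum_Icc_abs_le
    (fun k => ind X (k - 1) y ω / (Znum X (k - 1) (y - 1) ω + Znum X (k - 1) (y + 1) ω))
    (fun k => (Ynum_term_mem y k).1) (fun k => (Ynum_term_mem y k).2) n
  rw [Ynum_term_eq]
  have := abs_sub (G := ℝ)
  calc |∑ k ∈ Icc 1 n, cind X k y z ω / Znum X (k - 1) z ω -
        ∑ k ∈ Icc 1 n, ind X (k - 1) y ω / (Znum X (k - 1) (y - 1) ω + Znum X (k - 1) (y + 1) ω)|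
      ≤ |∑ k ∈ Icc 1 n, cind X k y z ω / Znum X (k - 1) z ω| +
        |∑ k ∈ Icc 1 n, ind X (k - 1) y ω / (Znum X (k - 1) (y - 1) ω + Znum X (k - 1) (y + 1) ω)| :=
        abs_sub _ _
    _ ≤ (n : ℝ) + (n : ℝ) := add_le_add h1 h2
    _ = 2 * n := by ring

lemma DM_bound (y z : ℤ) (n : ℕ) : |DM X y z n ω| ≤ 2 := by
  unfold DM
  have h1 := Ypre_term_mem (X := X) (ω := ω) y z (n + 1)
  simp only [Nat.add_sub_cancel] at h1
  have h2 := Ynum_term_mem (X := X) (ω := ω) y (n + 1)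
  simp only [Nat.add_sub_cancel] at h2
  rw [abs_sub_le_iff]
  constructor <;> linarith [h1.1, h1.2, h2.1, h2.2]

lemma int_of_bdd {f : Ω → ℝ} (hm : Measurable f) (C : ℝ) (hb : ∀ ω, |f ω| ≤ C) :
    Integrable f μ :=
  Integrable.mono' (integrable_const C) hm.aestronglyMeasurable
    (ae_of_all _ (by simpa [Real.norm_eq_abs] using hb))

lemma integrable_MG (h : Adapted ℱ X) (y z : ℤ) (n : ℕ) :
    Integrable (fun ω => MG X y z n ω) μ :=
  int_of_bdd ((measurable_MG h y z n).mono (ℱ.le n) le_rfl) (2 * n)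
    (fun ω => MG_bound y z n)

lemma integrable_DM (h : Adapted ℱ X) (y z : ℤ) (n : ℕ) :
    Integrable (fun ω => DM X y z n ω) μ :=
  int_of_bdd ((measurable_DM h y z n).mono (ℱ.le (n + 1)) le_rfl) 2
    (fun ω => DM_bound y z n)

lemma DM_indicator (y z : ℤ) (n : ℕ) :
    DM X y z n ω = (ind X n y ω / Znum X n z ω)
        * Set.indicator {ω' | X (n + 1) ω' = z} (fun _ => (1 : ℝ)) ω
      - ind X n y ω / (Znum X n (y - 1) ω + Znum X n (y + 1) ω) := by
  unfold DM cind ind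
  simp only [Set.indicator_apply, Set.mem_setOf_eq, Nat.add_sub_cancel]
  by_cases h1 : X n ω = y <;> by_cases h2 : X (n + 1) ω = z <;>
    simp [h1, h2]

end Prob

section Prob2

variable {m0 : MeasurableSpace Ω} {μ : Measure Ω} [IsProbabilityMeasure μ]
  {ℱ : Filtration ℕ m0} {v0 : ℤ}

lemma condexp_DM (h : IsVRRW μ ℱ X v0) (y z : ℤ) (hz : z = y + 1 ∨ z = y - 1) (n : ℕ) :
    μ[fun ω => DM X y z n ω | ℱ n] =ᵐ[μ] 0 := by
  set g : Ω → ℝ := fun ω => ind X n y ω / Znum X n z ω with hgdef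
  set c : Ω → ℝ := fun ω => ind X n y ω / (Znum X n (y - 1) ω + Znum X n (y + 1) ω) with hcdef
  set I : Ω → ℝ := Set.indicator {ω' | X (n + 1) ω' = z} (fun _ => (1 : ℝ)) with hIdef
  have hgme : Measurable[ℱ n] g :=
    (measurable_ind' h.adapted le_rfl y).div (measurable_Znum' h.adapted le_rfl z)
  have hgb : ∀ ω, |g ω| ≤ 1 := by
    intro ω
    rw [abs_of_nonneg (div_nonneg (ind_nonneg _ _) (Znum_pos _ _).le)]
    rw [div_le_one (Znum_pos _ _)]
    exact le_trans (ind_le_one n y) (Znum_ge_one n z)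
  have hIme : Measurable I := by
    have hset : MeasurableSet {ω' | X (n + 1) ω' = z} :=
      (measurable_X h.adapted (le_refl (n + 1))).mono (ℱ.le (n + 1)) le_rfl
        (measurableSet_singleton z)
    exact measurable_const.indicator hset
  have hIb : ∀ ω, |I ω| ≤ 1 := by
    intro ω
    simp only [hIdef, Set.indicator_apply]
    split <;> norm_num
  have hIint : Integrable I μ := int_of_bdd hIme 1 hIb
  have hgIme : Measurable (g * I) := (hgme.mono (ℱ.le n) le_rfl).mul hIme
  have hgIint : Integrable (g * I) μ := by
    refine int_of_bdd hgIme 1 fun ω => ?_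
    rw [Pi.mul_apply, abs_mul]
    calc |g ω| * |I ω| ≤ 1 * 1 := mul_le_mul (hgb ω) (hIb ω) (abs_nonneg _) zero_le_one
      _ = 1 := by norm_num
  have hcme : Measurable[ℱ n] c :=
    (measurable_ind' h.adapted le_rfl y).div
      ((measurable_Znum' h.adapted le_rfl (y - 1)).add (measurable_Znum' h.adapted le_rfl (y + 1)))
  have hcb : ∀ ω, |c ω| ≤ 1 := by
    intro ω
    have hD : (0:ℝ) < Znum X n (y - 1) ω + Znum X n (y + 1) ω :=
      add_pos (Znum_pos _ _) (Znum_pos _ _)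
    rw [abs_of_nonneg (div_nonneg (ind_nonneg _ _) hD.le), div_le_one hD]
    have h1 := ind_le_one (X := X) (ω := ω) n y
    have h2 := Znum_ge_one (X := X) (ω := ω) n (y - 1)
    have h3 := (Znum_pos (X := X) (ω := ω) n (y + 1)).le
    linarith
  have hcint : Integrable c μ := int_of_bdd (hcme.mono (ℱ.le n) le_rfl) 1 hcb
  have hDMeq : (fun ω => DM X y z n ω) = g * I - c := by
    funext ω
    rw [Pi.sub_apply, Pi.mul_apply]
    exact DM_indicator y z n
  rw [hDMeq]
  have h1 : μ[g * I - c|ℱ n] =ᵐ[μ] μ[g * I|ℱ n] - μ[c|ℱ n] := condExp_sub hgIint hcint _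
  have h2 : μ[g * I|ℱ n] =ᵐ[μ] g * μ[I|ℱ n] :=
    condExp_mul_of_stronglyMeasurable_left hgme.stronglyMeasurable hgIint hIint
  have h3 : μ[c|ℱ n] = c :=
    condExp_of_stronglyMeasurable (ℱ.le n) hcme.stronglyMeasurable hcint
  filter_upwards [h1, h2, h.step n] with ω e1 e2 estep
  rw [Pi.zero_apply, e1, Pi.sub_apply, e2, Pi.mul_apply, h3]
  have estepz := estep z
  rw [hIdef, estepz]
  by_cases hy : X n ω = y
  · have hcond : z = X n ω + 1 ∨ z = X n ω - 1 := by rw [hy]; exact hz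
    rw [if_pos hcond, hy]
    simp only [hgdef, hcdef]
    unfold ind
    rw [if_pos hy]
    have hZz := Znum_pos (X := X) (ω := ω) n z
    have hD : (0:ℝ) < Znum X n (y - 1) ω + Znum X n (y + 1) ω :=
      add_pos (Znum_pos _ _) (Znum_pos _ _)
    field_simp
    ring
  · have hcond2 : ind X n y ω = 0 := by unfold ind; rw [if_neg hy]
    simp only [hgdef, hcdef, hcond2]
    simp

lemma martingale_MG (h : IsVRRW μ ℱ X v0) (y z : ℤ) (hz : z = y + 1 ∨ z = y - 1) :
    Martingale (fun n ω => MG X y z n ω) ℱ μ := by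
  apply martingale_nat (fun n => (measurable_MG h.adapted y z n).stronglyMeasurable)
    (fun n => integrable_MG h.adapted y z n)
  intro n
  have hsum : (fun ω => MG X y z (n + 1) ω)
      = (fun ω => MG X y z n ω) + fun ω => DM X y z n ω := by
    funext ω
    rw [Pi.add_apply]
    exact MG_succ y z n
  have h1 : μ[fun ω => MG X y z (n + 1) ω|ℱ n]
      =ᵐ[μ] μ[fun ω => MG X y z n ω|ℱ n] + μ[fun ω => DM X y z n ω|ℱ n] := by
    rw [hsum]
    exact condExp_add (integrable_MG h.adapted y z n) (integrable_DM h.adapted y z n) _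
  have h2 : μ[fun ω => MG X y z n ω|ℱ n] = fun ω => MG X y z n ω :=
    condExp_of_stronglyMeasurable (ℱ.le n)
      (measurable_MG h.adapted y z n).stronglyMeasurable (integrable_MG h.adapted y z n)
  filter_upwards [h1, condexp_DM h y z hz n] with ω e1 e2
  rw [e1, Pi.add_apply, h2, e2, Pi.zero_apply, add_zero]

-- quadratic variation bounds (pathwise)
lemma u_sq_bound (y z : ℤ) (n : ℕ) :
    ∑ k ∈ Icc 1 n, (cind X k y z ω / Znum X (k - 1) z ω) ^ 2 ≤ 2 := by
  have key := sq_series_bound (fun k => cind X k y z ω) (fun k => Znum X (k - 1) z ω)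
    (fun k => cind_cases k y z)
    (fun k hk hone => by
      have h2 := cind_sum_le (X := X) (ω := ω) y z (k - 1)
      linarith) n
  have heq : ∀ k, (cind X k y z ω / Znum X (k - 1) z ω) ^ 2
      = cind X k y z ω / (Znum X (k - 1) z ω) ^ 2 := by
    intro k
    rcases cind_cases (X := X) (ω := ω) k y z with hc | hc <;> rw [hc] <;>
      simp [div_pow]
  rw [Finset.sum_congr rfl fun k _ => heq k]
  have hs0 : (0:ℝ) ≤ ∑ k ∈ Icc 1 n, cind X k y z ω :=
    Finset.sum_nonneg fun k _ => cind_nonneg k y z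
  have hpos : (0:ℝ) < 1 + ∑ k ∈ Icc 1 n, cind X k y z ω := by linarith
  have : (0:ℝ) ≤ 2 / (1 + ∑ k ∈ Icc 1 n, cind X k y z ω) := by positivity
  linarith

lemma v_sq_bound (hnn : ∀ n, X (n + 1) ω = X n ω + 1 ∨ X (n + 1) ω = X n ω - 1)
    (y : ℤ) (n : ℕ) :
    ∑ k ∈ Icc 1 n,
      (ind X (k - 1) y ω / (Znum X (k - 1) (y - 1) ω + Znum X (k - 1) (y + 1) ω)) ^ 2 ≤ 2 := by
  have hind01 : ∀ k, ind X (k - 1) y ω = 0 ∨ ind X (k - 1) y ω = 1 := by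
    intro k; unfold ind; split <;> simp
  have key := sq_series_bound (fun k => ind X (k - 1) y ω)
    (fun k => Znum X (k - 1) (y - 1) ω + Znum X (k - 1) (y + 1) ω)
    hind01
    (fun k hk hone => by
      have hshift : ∑ j ∈ Icc 1 (k - 1), ind X (j - 1) y ω
          = ∑ j ∈ Finset.range (k - 1), ind X j y ω := shift_sum' (fun j => ind X j y ω) (k - 1)
      have hsub : ∑ j ∈ Finset.range (k - 1), ind X j y ω
          ≤ ∑ j ∈ Finset.range ((k - 1) + 1), ind X j y ω := by
        exact Finset.sum_le_sum_of_subset_of_nonneg (Finset.range_subset_range.2 (by omega))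
          fun j _ _ => ind_nonneg j y
      have hZy : 1 + ∑ j ∈ Finset.range ((k - 1) + 1), ind X j y ω = Znum X (k - 1) y ω :=
        (Znum_sum_ind (k - 1) y).symm
      have hnb := neighbor (X := X) (ω := ω) hnn (k - 1) y
      calc 1 + ∑ j ∈ Icc 1 (k - 1), ind X (j - 1) y ω
          = 1 + ∑ j ∈ Finset.range (k - 1), ind X j y ω := by rw [hshift]
        _ ≤ 1 + ∑ j ∈ Finset.range ((k - 1) + 1), ind X j y ω := by linarith
        _ = Znum X (k - 1) y ω := hZy
        _ ≤ Znum X (k - 1) (y - 1) ω + Znum X (k - 1) (y + 1) ω := hnb) n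
  have heq : ∀ k, (ind X (k - 1) y ω / (Znum X (k - 1) (y - 1) ω + Znum X (k - 1) (y + 1) ω)) ^ 2
      = ind X (k - 1) y ω / (Znum X (k - 1) (y - 1) ω + Znum X (k - 1) (y + 1) ω) ^ 2 := by
    intro k
    rcases hind01 k with hc | hc <;> rw [hc] <;> simp [div_pow]
  rw [Finset.sum_congr rfl fun k _ => heq k]
  have hs0 : (0:ℝ) ≤ ∑ k ∈ Icc 1 n, ind X (k - 1) y ω :=
    Finset.sum_nonneg fun k _ => by rcases hind01 k with hc | hc <;> simp [hc]
  have hpos : (0:ℝ) < 1 + ∑ k ∈ Icc 1 n, ind X (k - 1) y ω := by linarith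
  have : (0:ℝ) ≤ 2 / (1 + ∑ k ∈ Icc 1 n, ind X (k - 1) y ω) := by positivity
  linarith

lemma Q_bound (hnn : ∀ n, X (n + 1) ω = X n ω + 1 ∨ X (n + 1) ω = X n ω - 1)
    (y z : ℤ) (n : ℕ) :
    ∑ k ∈ Icc 1 n, (DM X y z (k - 1) ω) ^ 2 ≤ 8 := by
  have hterm : ∀ k ∈ Icc 1 n, (DM X y z (k - 1) ω) ^ 2
      ≤ 2 * (cind X k y z ω / Znum X (k - 1) z ω) ^ 2
        + 2 * (ind X (k - 1) y ω / (Znum X (k - 1) (y - 1) ω + Znum X (k - 1) (y + 1) ω)) ^ 2 := by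
    intro k hk
    simp only [Finset.mem_Icc] at hk
    have hidx : k - 1 + 1 = k := by omega
    have hDMval : DM X y z (k - 1) ω
        = cind X k y z ω / Znum X (k - 1) z ω
          - ind X (k - 1) y ω / (Znum X (k - 1) (y - 1) ω + Znum X (k - 1) (y + 1) ω) := by
      unfold DM
      rw [hidx]
    rw [hDMval]
    set u := cind X k y z ω / Znum X (k - 1) z ω
    set v := ind X (k - 1) y ω / (Znum X (k - 1) (y - 1) ω + Znum X (k - 1) (y + 1) ω)
    nlinarith [sq_nonneg (u + v)]
  calc ∑ k ∈ Icc 1 n, (DM X y z (k - 1) ω) ^ 2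
      ≤ ∑ k ∈ Icc 1 n, (2 * (cind X k y z ω / Znum X (k - 1) z ω) ^ 2
        + 2 * (ind X (k - 1) y ω / (Znum X (k - 1) (y - 1) ω + Znum X (k - 1) (y + 1) ω)) ^ 2) :=
        Finset.sum_le_sum hterm
    _ = 2 * (∑ k ∈ Icc 1 n, (cind X k y z ω / Znum X (k - 1) z ω) ^ 2)
        + 2 * ∑ k ∈ Icc 1 n,
          (ind X (k - 1) y ω / (Znum X (k - 1) (y - 1) ω + Znum X (k - 1) (y + 1) ω)) ^ 2 := by
        rw [Finset.sum_add_distrib, Finset.mul_sum, Finset.mul_sum]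
    _ ≤ 2 * 2 + 2 * 2 := by
        have h1 := u_sq_bound (X := X) (ω := ω) y z n
        have h2 := v_sq_bound (X := X) (ω := ω) hnn y n
        have hs1 : (0:ℝ) ≤ ∑ k ∈ Icc 1 n, (cind X k y z ω / Znum X (k - 1) z ω) ^ 2 :=
          Finset.sum_nonneg fun k _ => sq_nonneg _
        nlinarith
    _ = 8 := by norm_num

end Prob2

section Prob3

variable {m0 : MeasurableSpace Ω} {μ : Measure Ω} [IsProbabilityMeasure μ]
  {ℱ : Filtration ℕ m0} {v0 : ℤ}

lemma measurable_MG0 (h : Adapted ℱ X) (y z : ℤ) (n : ℕ) :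
    Measurable fun ω => MG X y z n ω :=
  (measurable_MG h y z n).mono (ℱ.le n) le_rfl

lemma integrable_MG_sq (h : Adapted ℱ X) (y z : ℤ) (n : ℕ) :
    Integrable (fun ω => (MG X y z n ω) ^ 2) μ := by
  refine int_of_bdd ((measurable_MG0 h y z n).pow_const 2) ((2 * n) ^ 2) fun ω => ?_
  have h1 := MG_bound (X := X) (ω := ω) y z n
  have h2 : (0:ℝ) ≤ |MG X y z n ω| := abs_nonneg _
  rw [abs_of_nonneg (sq_nonneg _), ← sq_abs]
  nlinarith

lemma sq_integral_bound (h : IsVRRW μ ℱ X v0) (y z : ℤ) (hz : z = y + 1 ∨ z = y - 1) :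
    ∀ n, ∫ ω, (MG X y z n ω) ^ 2 ∂μ ≤ 8 := by
  have hnn_ae : ∀ᵐ ω ∂μ, ∀ k, X (k + 1) ω = X k ω + 1 ∨ X (k + 1) ω = X k ω - 1 :=
    ae_all_iff.2 h.nearest
  set Q : ℕ → Ω → ℝ := fun n ω => ∑ k ∈ Icc 1 n, (DM X y z (k - 1) ω) ^ 2 with hQ
  have hDMme : ∀ k : ℕ, Measurable fun ω => DM X y z k ω :=
    fun k => (measurable_DM h.adapted y z k).mono (ℱ.le (k + 1)) le_rfl
  have hQme : ∀ n, Measurable (Q n) := fun n =>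
    Finset.measurable_sum _ fun k _ => (hDMme (k - 1)).pow_const 2
  have hQb : ∀ n ω, |Q n ω| ≤ 4 * n := by
    intro n ω
    rw [abs_of_nonneg (Finset.sum_nonneg fun k _ => sq_nonneg _)]
    calc ∑ k ∈ Icc 1 n, (DM X y z (k - 1) ω) ^ 2 ≤ ∑ _k ∈ Icc 1 n, (4:ℝ) := by
          refine Finset.sum_le_sum fun k _ => ?_
          have h1 := DM_bound (X := X) (ω := ω) y z (k - 1)
          have h2 : (0:ℝ) ≤ |DM X y z (k - 1) ω| := abs_nonneg _
          rw [← sq_abs]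
          nlinarith
      _ = ((Icc 1 n).card : ℝ) * 4 := by rw [Finset.sum_const, nsmul_eq_mul]
      _ = (n : ℝ) * 4 := by rw [Nat.card_Icc]; norm_num
      _ = 4 * n := by ring
  have hQint : ∀ n, Integrable (Q n) μ := fun n => int_of_bdd (hQme n) (4 * n) (hQb n)
  have hMGsq : ∀ n, Integrable (fun ω => (MG X y z n ω) ^ 2) μ :=
    fun n => integrable_MG_sq h.adapted y z n
  have key : ∀ n, ∫ ω, (MG X y z n ω) ^ 2 ∂μ ≤ ∫ ω, Q n ω ∂μ := by
    intro n
    induction n with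
    | zero =>
        have e1 : (fun ω => (MG X y z 0 ω) ^ 2) = fun _ => (0:ℝ) := funext fun ω => by
          rw [MG_zero]; norm_num
        have e2 : Q 0 = fun _ => (0:ℝ) := funext fun ω => by simp [hQ]
        rw [e1, e2]
    | succ n ih =>
        have hDMsqint : Integrable (fun ω => (DM X y z n ω) ^ 2) μ := by
          refine int_of_bdd ((hDMme n).pow_const 2) 4 fun ω => ?_
          have h1 := DM_bound (X := X) (ω := ω) y z n
          have h2 : (0:ℝ) ≤ |DM X y z n ω| := abs_nonneg _
          rw [abs_of_nonneg (sq_nonneg _), ← sq_abs]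
          nlinarith
        have hcrossme : Measurable (fun ω => MG X y z n ω * DM X y z n ω) :=
          (measurable_MG0 h.adapted y z n).mul (hDMme n)
        have hcrossint : Integrable (fun ω => MG X y z n ω * DM X y z n ω) μ := by
          refine int_of_bdd hcrossme (2 * n * 2) fun ω => ?_
          rw [abs_mul]
          exact mul_le_mul (MG_bound y z n) (DM_bound y z n) (abs_nonneg _) (by positivity)
        have hcross0 : ∫ ω, MG X y z n ω * DM X y z n ω ∂μ = 0 := by
          have hpull : μ[fun ω => MG X y z n ω * DM X y z n ω|ℱ n]
              =ᵐ[μ] (fun ω => MG X y z n ω) * μ[fun ω => DM X y z n ω|ℱ n] :=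
            condExp_mul_of_stronglyMeasurable_left (measurable_MG h.adapted y z n).stronglyMeasurable
              hcrossint (integrable_DM h.adapted y z n)
          have hzero : (fun ω => MG X y z n ω) * μ[fun ω => DM X y z n ω|ℱ n]
              =ᵐ[μ] (fun _ => (0:ℝ)) := by
            filter_upwards [condexp_DM h y z hz n] with ω e
            rw [Pi.mul_apply, e, Pi.zero_apply, mul_zero]
          calc ∫ ω, MG X y z n ω * DM X y z n ω ∂μ
              = ∫ ω, (μ[fun ω => MG X y z n ω * DM X y z n ω|ℱ n]) ω ∂μ :=
                (integral_condExp (ℱ.le n)).symm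
            _ = ∫ _ω, (0:ℝ) ∂μ := integral_congr_ae (hpull.trans hzero)
            _ = 0 := by simp
        have hexp : (fun ω => (MG X y z (n + 1) ω) ^ 2)
            = fun ω => (MG X y z n ω) ^ 2
                + (MG X y z n ω * DM X y z n ω * 2 + (DM X y z n ω) ^ 2) :=
          funext fun ω => by rw [MG_succ]; ring
        have hint2 : Integrable
            (fun ω => MG X y z n ω * DM X y z n ω * 2 + (DM X y z n ω) ^ 2) μ :=
          (hcrossint.mul_const 2).add hDMsqint
        have hI1 : ∫ ω, (MG X y z (n + 1) ω) ^ 2 ∂μ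
            = ∫ ω, (MG X y z n ω) ^ 2 ∂μ
              + ∫ ω, (MG X y z n ω * DM X y z n ω * 2 + (DM X y z n ω) ^ 2) ∂μ := by
          rw [hexp, integral_add (hMGsq n) hint2]
        have hI2 : ∫ ω, (MG X y z n ω * DM X y z n ω * 2 + (DM X y z n ω) ^ 2) ∂μ
            = ∫ ω, (DM X y z n ω) ^ 2 ∂μ := by
          rw [integral_add (hcrossint.mul_const 2) hDMsqint, integral_mul_const, hcross0]
          ring
        have hQsucc : ∫ ω, Q (n + 1) ω ∂μ
            = ∫ ω, Q n ω ∂μ + ∫ ω, (DM X y z n ω) ^ 2 ∂μ := by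
          have e : Q (n + 1) = fun ω => Q n ω + (DM X y z n ω) ^ 2 := funext fun ω => by
            simp only [hQ]
            rw [Finset.sum_Icc_succ_top (by omega : 1 ≤ n + 1)]
            simp
          rw [e, integral_add (hQint n) hDMsqint]
        rw [hI1, hI2, hQsucc]
        linarith
  intro n
  have hle8 : ∫ ω, Q n ω ∂μ ≤ 8 := by
    have hae : ∀ᵐ ω ∂μ, Q n ω ≤ (fun _ => (8:ℝ)) ω := by
      filter_upwards [hnn_ae] with ω hω
      exact Q_bound hω y z n
    calc ∫ ω, Q n ω ∂μ ≤ ∫ _ω, (8:ℝ) ∂μ := integral_mono_ae (hQint n) (integrable_const 8) hae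
      _ = 8 := by simp
  exact (key n).trans hle8

lemma mart_conv (h : IsVRRW μ ℱ X v0) (y z : ℤ) (hz : z = y + 1 ∨ z = y - 1) :
    ∀ᵐ ω ∂μ, ∃ c, Tendsto (fun n => Ypre X y z n ω - Ynum X n y ω) atTop (𝓝 c) := by
  have hmart := martingale_MG h y z hz
  have hbdd : ∀ n, eLpNorm ((fun n ω => MG X y z n ω) n) 1 μ ≤ ((9 : ℝ≥0) : ℝ≥0∞) := by
    intro n
    have hint : Integrable (fun ω => MG X y z n ω) μ := integrable_MG h.adapted y z n
    rw [eLpNorm_one_eq_lintegral_enorm, ← ofReal_integral_norm_eq_lintegral_enorm hint]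
    have habs : ∫ ω, ‖MG X y z n ω‖ ∂μ ≤ 9 := by
      have hptw : ∀ ω, ‖MG X y z n ω‖ ≤ 1 + (MG X y z n ω) ^ 2 := fun ω => by
        rw [Real.norm_eq_abs]
        nlinarith [sq_abs (MG X y z n ω), sq_nonneg (|MG X y z n ω| - 1),
          abs_nonneg (MG X y z n ω)]
      have hsqint : Integrable (fun ω => 1 + (MG X y z n ω) ^ 2) μ :=
        (integrable_const 1).add (integrable_MG_sq h.adapted y z n)
      calc ∫ ω, ‖MG X y z n ω‖ ∂μ ≤ ∫ ω, (1 + (MG X y z n ω) ^ 2) ∂μ :=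
            integral_mono hint.norm hsqint hptw
        _ = 1 + ∫ ω, (MG X y z n ω) ^ 2 ∂μ := by
            rw [integral_add (integrable_const 1) (integrable_MG_sq h.adapted y z n)]
            simp
        _ ≤ 1 + 8 := by linarith [sq_integral_bound h y z hz n]
        _ = 9 := by norm_num
    calc ENNReal.ofReal (∫ ω, ‖MG X y z n ω‖ ∂μ) ≤ ENNReal.ofReal 9 :=
          ENNReal.ofReal_le_ofReal habs
      _ = ((9 : ℝ≥0) : ℝ≥0∞) := by norm_num
  have := hmart.submartingale.exists_ae_tendsto_of_bdd hbdd
  filter_upwards [this] with ω hω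
  obtain ⟨c, hc⟩ := hω
  exact ⟨c, hc⟩

end Prob3

end VRRWaux

/-- Corollary 3.1(iv)–(v) of Tarrès: a.s. on `Υ(x)` the limit
`β⁻_∞(x+2) = lim_n Z_n(x+1)/Z_n(x+2)` exists in `[0,∞)`, and if moreover
`Z_∞(x+2) = ∞` then `α⁻_n(x+2)` converges to the same limit. -/
theorem betaMinus_limit
    {Ω : Type*} {m0 : MeasurableSpace Ω} (μ : Measure Ω) [IsProbabilityMeasure μ]
    (ℱ : Filtration ℕ m0) (X : ℕ → Ω → ℤ) (v0 : ℤ) (h : IsVRRW μ ℱ X v0) (x : ℤ) :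
    ∀ᵐ ω ∂μ, ω ∈ Upsilon X x →
      ∃ l : ℝ, 0 ≤ l ∧
        Tendsto (fun n => Znum X n (x + 1) ω / Znum X n (x + 2) ω) atTop (nhds l) ∧
        (¬ BddAbove (Set.range fun n => Znum X n (x + 2) ω) →
          Tendsto (fun n => alphaMinus X n (x + 2) ω) atTop (nhds l)) := by
  have h1 := VRRWaux.mart_conv h (x + 2) (x + 1) (Or.inr (by ring))
  have h2 := VRRWaux.mart_conv h x (x + 1) (Or.inl rfl)
  have h3 : ∀ᵐ ω ∂μ, ∀ n, X (n + 1) ω = X n ω + 1 ∨ X (n + 1) ω = X n ω - 1 :=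
    MeasureTheory.ae_all_iff.2 h.nearest
  filter_upwards [h1, h2, h3] with ω hm hmp hnn
  intro hUps
  refine VRRWaux.pathwise_main x hnn ?_ ?_ hUps
  · obtain ⟨c, hc⟩ := hm
    refine ⟨c, hc.congr fun n => ?_⟩
    rw [← VRRWaux.Yminus_eq_Ypre]
  · obtain ⟨c, hc⟩ := hmp
    refine ⟨c, hc.congr fun n => ?_⟩
    rw [← VRRWaux.Yplus_eq_Ypre]
end

section
/- For the VRRW on ℤ started at v₀ ∈ ℤ, the quantity R_n = Z_n(2) + Z_n(4) - Z_n(1) - Z_n(3) satisfies, for all n, R_n = Z_n^-(5) - Z_n^+(0) + (1_{X_n=2 or X_n≥4} - 1_{X_n≤1 or X_n=3})/2 + C(v₀), where C(v₀) depends only on the initial position; consequently R_n increases only through visits from 5 to 4 and decreases only through visits from 0 to 1. -/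
/-- `Zd X n v`: `1` plus the number of visits of the deterministic path `X`
to the site `v` up through time `n`, as a real number. -/
noncomputable def Zd (X : ℕ → ℤ) (n : ℕ) (v : ℤ) : ℝ :=
  1 + ∑ i ∈ Finset.range (n + 1), if X i = v then (1 : ℝ) else 0

set_option maxHeartbeats 2000000 in
lemma step_aux (a b : ℤ) (hb : b = a + 1 ∨ b = a - 1) :
    (if b = 2 then (1:ℝ) else 0) + (if b = 4 then (1:ℝ) else 0)
      - (if b = 1 then (1:ℝ) else 0) - (if b = 3 then (1:ℝ) else 0)
    = (if a = 5 ∧ b = 4 then (1:ℝ) else 0) - (if a = 0 ∧ b = 1 then (1:ℝ) else 0)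
      + ((if b = 2 ∨ 4 ≤ b then (1:ℝ) else 0) - (if b ≤ 1 ∨ b = 3 then (1:ℝ) else 0)
         - ((if a = 2 ∨ 4 ≤ a then (1:ℝ) else 0) - (if a ≤ 1 ∨ a = 3 then (1:ℝ) else 0))) / 2 := by
  split_ifs <;> first | (exfalso; omega) | norm_num

/-- Equation (23) of Tarrès: for any nearest-neighbor path on `ℤ`, the quantity
`R_n = Z_n(2) + Z_n(4) - Z_n(1) - Z_n(3)` equals
`Z_n^-(5) - Z_n^+(0) + (1_{X_n=2 ∨ X_n≥4} - 1_{X_n≤1 ∨ X_n=3})/2` plus a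
constant depending only on the initial position. -/
theorem R_decomposition (X : ℕ → ℤ) (v0 : ℤ) (h0 : X 0 = v0)
    (hnn : ∀ n, X (n + 1) = X n + 1 ∨ X (n + 1) = X n - 1) :
    ∃ C : ℝ, ∀ n : ℕ,
      Zd X n 2 + Zd X n 4 - Zd X n 1 - Zd X n 3 =
        (∑ k ∈ Finset.Icc 1 n, if X (k - 1) = 5 ∧ X k = 4 then (1 : ℝ) else 0) -
        (∑ k ∈ Finset.Icc 1 n, if X (k - 1) = 0 ∧ X k = 1 then (1 : ℝ) else 0) +
        ((if X n = 2 ∨ 4 ≤ X n then (1 : ℝ) else 0) -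
          (if X n ≤ 1 ∨ X n = 3 then (1 : ℝ) else 0)) / 2 + C := by
  refine ⟨Zd X 0 2 + Zd X 0 4 - Zd X 0 1 - Zd X 0 3 -
      ((if X 0 = 2 ∨ 4 ≤ X 0 then (1:ℝ) else 0) -
        (if X 0 ≤ 1 ∨ X 0 = 3 then (1:ℝ) else 0)) / 2, ?_⟩
  intro n
  induction n with
  | zero => simp
  | succ n ih =>
    have hZ : ∀ v : ℤ, Zd X (n + 1) v = Zd X n v + (if X (n + 1) = v then (1:ℝ) else 0) := by
      intro v
      simp only [Zd, Finset.sum_range_succ]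
      ring
    rw [hZ 2, hZ 4, hZ 1, hZ 3,
      Finset.sum_Icc_succ_top (by omega : 1 ≤ n + 1),
      Finset.sum_Icc_succ_top (by omega : 1 ≤ n + 1)]
    simp only [Nat.add_sub_cancel]
    have hs := step_aux (X n) (X (n + 1)) (hnn n)
    linarith [hs, ih]
end
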